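/- arXiv:cs/0309014 — 5 statements merged into one kernel-verified Lean document; each statement's English description precedes it below -/
import Mathlib

section
/- For every region P with at least two pixels, every cycle cover of P (in particular every tour of P) has a number of turns at least equal to the minimum size of a strip cover of P. -/
/-- A pixel is a point of `ℤ × ℤ`. -/
abbrev Pixel : Type := ℤ × ℤ

/-- Two pixels are adjacent if their ℓ¹-distance is 1. -/
def Adjacent (p q : Pixel) : Prop := |p.1 - q.1| + |p.2 - q.2| = 1

/-- A cycle: a cyclic sequence of `k ≥ 2` pixels (encoded as a `k`-periodic
function on `ℤ`) in which consecutive pixels are adjacent. -/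
structure GridCycle where
  k : ℕ
  two_le : 2 ≤ k
  pts : ℤ → Pixel
  periodic : ∀ i : ℤ, pts (i + k) = pts i
  adj : ∀ i : ℤ, Adjacent (pts i) (pts (i + 1))

/-- The set of pixels covered by a cycle. -/
def GridCycle.covers (C : GridCycle) : Set Pixel := Set.range C.pts

/-- Turn cost at position `i`: 0 if the walk goes straight, 2 for a U-turn,
1 for a 90° turn. -/
def GridCycle.turnCost (C : GridCycle) (i : ℤ) : ℕ :=
  if C.pts (i + 1) - C.pts i = C.pts i - C.pts (i - 1) then 0
  else if C.pts (i + 1) - C.pts i = -(C.pts i - C.pts (i - 1)) then 2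
  else 1

/-- The number of turns of a cycle: total turn cost over all positions. -/
def GridCycle.turns (C : GridCycle) : ℕ :=
  ∑ i ∈ Finset.range C.k, C.turnCost (i : ℤ)

/-- A set of pixels is connected under adjacency. -/
def ConnectedIn (P : Set Pixel) : Prop :=
  ∀ p ∈ P, ∀ q ∈ P, Relation.ReflTransGen (fun a b => b ∈ P ∧ Adjacent a b) p q

/-- A region is a finite nonempty set of pixels connected under adjacency. -/
def IsRegion (P : Set Pixel) : Prop := P.Finite ∧ P.Nonempty ∧ ConnectedIn P

/-- A tour of `P`: a cycle whose pixels lie in `P` covering every pixel of `P`. -/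
def IsTour (P : Set Pixel) (C : GridCycle) : Prop := C.covers = P

/-- A cycle cover of `P`: a finite collection of cycles with pixels in `P`
covering every pixel of `P`. -/
def IsCycleCover (P : Set Pixel) (CC : List GridCycle) : Prop :=
  (∀ C ∈ CC, C.covers ⊆ P) ∧ ∀ p ∈ P, ∃ C ∈ CC, p ∈ C.covers

/-- The number of turns of a cycle cover. -/
def coverTurns (CC : List GridCycle) : ℕ := (CC.map GridCycle.turns).sum

/-- A horizontal strip of `P`: a maximal horizontal run of pixels of `P`. -/
def IsHStrip (P S : Set Pixel) : Prop :=
  ∃ x y : ℤ, ∃ ℓ : ℕ, S = {p : Pixel | p.2 = y ∧ x ≤ p.1 ∧ p.1 ≤ x + (ℓ : ℤ)} ∧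
    S ⊆ P ∧ (x - 1, y) ∉ P ∧ (x + (ℓ : ℤ) + 1, y) ∉ P

/-- A vertical strip of `P`: a maximal vertical run of pixels of `P`. -/
def IsVStrip (P S : Set Pixel) : Prop :=
  ∃ x y : ℤ, ∃ ℓ : ℕ, S = {p : Pixel | p.1 = x ∧ y ≤ p.2 ∧ p.2 ≤ y + (ℓ : ℤ)} ∧
    S ⊆ P ∧ (x, y - 1) ∉ P ∧ (x, y + (ℓ : ℤ) + 1) ∉ P

/-- A strip of `P` is a horizontal or vertical strip. -/
def IsStrip (P S : Set Pixel) : Prop := IsHStrip P S ∨ IsVStrip P S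

/-- A strip cover of `P`: a set of strips of `P` whose union is `P`. -/
def IsStripCover (P : Set Pixel) (F : Set (Set Pixel)) : Prop :=
  (∀ S ∈ F, IsStrip P S) ∧ ⋃₀ F = P

/-- The minimum size of a strip cover of `P`. -/
noncomputable def minStripCover (P : Set Pixel) : ℕ :=
  sInf {m | ∃ F, IsStripCover P F ∧ F.ncard = m}

/-- A rook placement in `P`: a subset of `P` no two distinct elements of which
lie in a common strip of `P`. -/
def IsRookPlacement (P R : Set Pixel) : Prop :=
  R ⊆ P ∧ ∀ p ∈ R, ∀ q ∈ R, p ≠ q → ¬∃ S, IsStrip P S ∧ p ∈ S ∧ q ∈ S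

/-- A maximal rook placement: every pixel of `P` lies in a common strip with
some element of `R`. -/
def IsMaximalRookPlacement (P R : Set Pixel) : Prop :=
  IsRookPlacement P R ∧ ∀ p ∈ P, ∃ r ∈ R, ∃ S, IsStrip P S ∧ p ∈ S ∧ r ∈ S

open scoped Classical

namespace StripAux

def hSeg (P : Set Pixel) (p : Pixel) : Set Pixel :=
  {q | q.2 = p.2 ∧ ∀ t : ℤ, ((q.1 ≤ t ∧ t ≤ p.1) ∨ (p.1 ≤ t ∧ t ≤ q.1)) → ((t, p.2) : Pixel) ∈ P}

def vSeg (P : Set Pixel) (p : Pixel) : Set Pixel :=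
  {q | q.1 = p.1 ∧ ∀ t : ℤ, ((q.2 ≤ t ∧ t ≤ p.2) ∨ (p.2 ≤ t ∧ t ≤ q.2)) → ((p.1, t) : Pixel) ∈ P}

lemma mem_hSeg_self {P : Set Pixel} {p : Pixel} (hp : p ∈ P) : p ∈ hSeg P p := by
  refine ⟨rfl, fun t ht => ?_⟩
  have : t = p.1 := by omega
  subst this; simpa using hp

lemma mem_vSeg_self {P : Set Pixel} {p : Pixel} (hp : p ∈ P) : p ∈ vSeg P p := by
  refine ⟨rfl, fun t ht => ?_⟩
  have : t = p.2 := by omega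
  subst this; simpa using hp

lemma hSeg_subset {P : Set Pixel} {p : Pixel} : hSeg P p ⊆ P := by
  rintro q ⟨h2, hI⟩
  have := hI q.1 (by omega)
  rwa [← h2, Prod.mk.eta] at this

lemma vSeg_subset {P : Set Pixel} {p : Pixel} : vSeg P p ⊆ P := by
  rintro q ⟨h1, hI⟩
  have := hI q.2 (by omega)
  rwa [← h1, Prod.mk.eta] at this

lemma hSeg_eq {P : Set Pixel} {p q : Pixel} (hq : q ∈ hSeg P p) : hSeg P q = hSeg P p := by
  obtain ⟨hq2, hqI⟩ := hq
  ext r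
  constructor
  · rintro ⟨hr2, hrI⟩
    refine ⟨hr2.trans hq2, fun t ht => ?_⟩
    rcases (by omega : ((r.1 ≤ t ∧ t ≤ q.1) ∨ (q.1 ≤ t ∧ t ≤ r.1)) ∨
        ((q.1 ≤ t ∧ t ≤ p.1) ∨ (p.1 ≤ t ∧ t ≤ q.1))) with h | h
    · have := hrI t h; rwa [hq2] at this
    · exact hqI t h
  · rintro ⟨hr2, hrI⟩
    refine ⟨hr2.trans hq2.symm, fun t ht => ?_⟩
    rcases (by omega : ((r.1 ≤ t ∧ t ≤ p.1) ∨ (p.1 ≤ t ∧ t ≤ r.1)) ∨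
        ((q.1 ≤ t ∧ t ≤ p.1) ∨ (p.1 ≤ t ∧ t ≤ q.1))) with h | h
    · have := hrI t h; rwa [← hq2] at this
    · have := hqI t h; rwa [← hq2] at this

lemma vSeg_eq {P : Set Pixel} {p q : Pixel} (hq : q ∈ vSeg P p) : vSeg P q = vSeg P p := by
  obtain ⟨hq1, hqI⟩ := hq
  ext r
  constructor
  · rintro ⟨hr1, hrI⟩
    refine ⟨hr1.trans hq1, fun t ht => ?_⟩
    rcases (by omega : ((r.2 ≤ t ∧ t ≤ q.2) ∨ (q.2 ≤ t ∧ t ≤ r.2)) ∨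
        ((q.2 ≤ t ∧ t ≤ p.2) ∨ (p.2 ≤ t ∧ t ≤ q.2))) with h | h
    · have := hrI t h; rwa [hq1] at this
    · exact hqI t h
  · rintro ⟨hr1, hrI⟩
    refine ⟨hr1.trans hq1.symm, fun t ht => ?_⟩
    rcases (by omega : ((r.2 ≤ t ∧ t ≤ p.2) ∨ (p.2 ≤ t ∧ t ≤ r.2)) ∨
        ((q.2 ≤ t ∧ t ≤ p.2) ∨ (p.2 ≤ t ∧ t ≤ q.2))) with h | h
    · have := hrI t h; rwa [← hq1] at this
    · have := hqI t h; rwa [← hq1] at this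

end StripAux
namespace StripAux

lemma isHStrip_hSeg {P : Set Pixel} {p : Pixel} (hfin : P.Finite) (hp : p ∈ P) :
    IsHStrip P (hSeg P p) := by
  have hS : (hSeg P p).Finite := hfin.subset hSeg_subset
  have hpS : p ∈ hSeg P p := mem_hSeg_self hp
  set T : Finset ℤ := hS.toFinset.image Prod.fst with hT
  have hTne : T.Nonempty := ⟨p.1, Finset.mem_image.2 ⟨p, hS.mem_toFinset.2 hpS, rfl⟩⟩
  set x := T.min' hTne with hx
  set M := T.max' hTne with hM
  have hmemT : ∀ q ∈ hSeg P p, q.1 ∈ T := fun q hq =>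
    Finset.mem_image.2 ⟨q, hS.mem_toFinset.2 hq, rfl⟩
  have hxp : x ≤ p.1 := Finset.min'_le _ _ (hmemT p hpS)
  have hpM : p.1 ≤ M := Finset.le_max' _ _ (hmemT p hpS)
  obtain ⟨a, haS, ha1⟩ : ∃ a ∈ hS.toFinset, a.1 = x :=
    Finset.mem_image.1 (show x ∈ Finset.image Prod.fst hS.toFinset from Finset.min'_mem T hTne)
  obtain ⟨b, hbS, hb1⟩ : ∃ b ∈ hS.toFinset, b.1 = M :=
    Finset.mem_image.1 (show M ∈ Finset.image Prod.fst hS.toFinset from Finset.max'_mem T hTne)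
  rw [hS.mem_toFinset] at haS hbS
  have hA : ∀ t : ℤ, x ≤ t → t ≤ p.1 → ((t, p.2) : Pixel) ∈ P := fun t h1 h2 =>
    haS.2 t (Or.inl ⟨by omega, h2⟩)
  have hB : ∀ t : ℤ, p.1 ≤ t → t ≤ M → ((t, p.2) : Pixel) ∈ P := fun t h1 h2 =>
    hbS.2 t (Or.inr ⟨h1, by omega⟩)
  have hmemS : ∀ q : Pixel, q.2 = p.2 → x ≤ q.1 → q.1 ≤ M → q ∈ hSeg P p := by
    intro q h2 hl hu
    refine ⟨h2, fun t ht => ?_⟩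
    rcases le_total t p.1 with h | h
    · exact hA t (by omega) h
    · exact hB t h (by omega)
  have hcast : ((M - x).toNat : ℤ) = M - x := Int.toNat_of_nonneg (by omega)
  refine ⟨x, p.2, (M - x).toNat, ?_, hSeg_subset, ?_, ?_⟩
  · ext q
    simp only [Set.mem_setOf_eq, hcast]
    constructor
    · intro hq
      exact ⟨hq.1, Finset.min'_le _ _ (hmemT q hq), by
        have := Finset.le_max' _ _ (hmemT q hq); omega⟩
    · rintro ⟨h2, hl, hu⟩
      exact hmemS q h2 hl (by omega)
  · intro hcon
    have : ((x - 1, p.2) : Pixel) ∈ hSeg P p := by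
      refine ⟨rfl, fun t ht => ?_⟩
      rcases (by omega : t = x - 1 ∨ (x ≤ t ∧ t ≤ p.1)) with h | h
      · subst h; exact hcon
      · exact hA t h.1 h.2
    have := Finset.min'_le _ _ (hmemT _ this)
    simp only at this; omega
  · intro hcon
    rw [hcast] at hcon
    have : ((M + 1, p.2) : Pixel) ∈ hSeg P p := by
      refine ⟨rfl, fun t ht => ?_⟩
      rcases (by omega : t = M + 1 ∨ (p.1 ≤ t ∧ t ≤ M)) with h | h
      · subst h; exact (by rwa [show x + (M - x) + 1 = M + 1 from by ring] at hcon)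
      · exact hB t h.1 h.2
    have := Finset.le_max' _ _ (hmemT _ this)
    simp only at this; omega

lemma isVStrip_vSeg {P : Set Pixel} {p : Pixel} (hfin : P.Finite) (hp : p ∈ P) :
    IsVStrip P (vSeg P p) := by
  have hS : (vSeg P p).Finite := hfin.subset vSeg_subset
  have hpS : p ∈ vSeg P p := mem_vSeg_self hp
  set T : Finset ℤ := hS.toFinset.image Prod.snd with hT
  have hTne : T.Nonempty := ⟨p.2, Finset.mem_image.2 ⟨p, hS.mem_toFinset.2 hpS, rfl⟩⟩
  set y := T.min' hTne with hy
  set M := T.max' hTne with hM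
  have hmemT : ∀ q ∈ vSeg P p, q.2 ∈ T := fun q hq =>
    Finset.mem_image.2 ⟨q, hS.mem_toFinset.2 hq, rfl⟩
  have hyp : y ≤ p.2 := Finset.min'_le _ _ (hmemT p hpS)
  have hpM : p.2 ≤ M := Finset.le_max' _ _ (hmemT p hpS)
  obtain ⟨a, haS, ha1⟩ : ∃ a ∈ hS.toFinset, a.2 = y :=
    Finset.mem_image.1 (show y ∈ Finset.image Prod.snd hS.toFinset from Finset.min'_mem T hTne)
  obtain ⟨b, hbS, hb1⟩ : ∃ b ∈ hS.toFinset, b.2 = M :=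
    Finset.mem_image.1 (show M ∈ Finset.image Prod.snd hS.toFinset from Finset.max'_mem T hTne)
  rw [hS.mem_toFinset] at haS hbS
  have hA : ∀ t : ℤ, y ≤ t → t ≤ p.2 → ((p.1, t) : Pixel) ∈ P := fun t h1 h2 =>
    haS.2 t (Or.inl ⟨by omega, h2⟩)
  have hB : ∀ t : ℤ, p.2 ≤ t → t ≤ M → ((p.1, t) : Pixel) ∈ P := fun t h1 h2 =>
    hbS.2 t (Or.inr ⟨h1, by omega⟩)
  have hmemS : ∀ q : Pixel, q.1 = p.1 → y ≤ q.2 → q.2 ≤ M → q ∈ vSeg P p := by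
    intro q h1 hl hu
    refine ⟨h1, fun t ht => ?_⟩
    rcases le_total t p.2 with h | h
    · exact hA t (by omega) h
    · exact hB t h (by omega)
  have hcast : ((M - y).toNat : ℤ) = M - y := Int.toNat_of_nonneg (by omega)
  refine ⟨p.1, y, (M - y).toNat, ?_, vSeg_subset, ?_, ?_⟩
  · ext q
    simp only [Set.mem_setOf_eq, hcast]
    constructor
    · intro hq
      exact ⟨hq.1, Finset.min'_le _ _ (hmemT q hq), by
        have := Finset.le_max' _ _ (hmemT q hq); omega⟩
    · rintro ⟨h1, hl, hu⟩
      exact hmemS q h1 hl (by omega)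
  · intro hcon
    have : ((p.1, y - 1) : Pixel) ∈ vSeg P p := by
      refine ⟨rfl, fun t ht => ?_⟩
      rcases (by omega : t = y - 1 ∨ (y ≤ t ∧ t ≤ p.2)) with h | h
      · subst h; exact hcon
      · exact hA t h.1 h.2
    have := Finset.min'_le _ _ (hmemT _ this)
    simp only at this; omega
  · intro hcon
    rw [hcast] at hcon
    have : ((p.1, M + 1) : Pixel) ∈ vSeg P p := by
      refine ⟨rfl, fun t ht => ?_⟩
      rcases (by omega : t = M + 1 ∨ (p.2 ≤ t ∧ t ≤ M)) with h | h
      · subst h; exact (by rwa [show y + (M - y) + 1 = M + 1 from by ring] at hcon)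
      · exact hB t h.1 h.2
    have := Finset.le_max' _ _ (hmemT _ this)
    simp only at this; omega

end StripAux
namespace StripAux

lemma adj_cases {p q : Pixel} (h : Adjacent p q) :
    (p.2 = q.2 ∧ (p.1 - q.1 = 1 ∨ q.1 - p.1 = 1)) ∨
    (p.1 = q.1 ∧ (p.2 - q.2 = 1 ∨ q.2 - p.2 = 1)) := by
  unfold Adjacent at h
  rcases abs_cases (p.1 - q.1) with ⟨e1, f1⟩ | ⟨e1, f1⟩ <;>
    rcases abs_cases (p.2 - q.2) with ⟨e2, f2⟩ | ⟨e2, f2⟩ <;>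
    rw [e1, e2] at h <;> omega

lemma pts_add_mul (C : GridCycle) (i m : ℤ) : C.pts (i + m * C.k) = C.pts i := by
  induction m using Int.induction_on with
  | zero => simp
  | succ n ih =>
    have h : i + ((n : ℤ) + 1) * C.k = (i + n * C.k) + C.k := by ring
    rw [h, C.periodic, ih]
  | pred n ih =>
    have h2 := C.periodic (i + (-(n : ℤ) - 1) * C.k)
    have h : i + (-(n : ℤ) - 1) * C.k + C.k = i + (-(n : ℤ)) * C.k := by ring
    rw [h] at h2
    rw [← h2]
    exact ih

lemma pts_emod (C : GridCycle) (i : ℤ) : C.pts i = C.pts (i % C.k) := by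
  have h : i = i % C.k + (i / C.k) * C.k := by
    rw [mul_comm]; exact (Int.emod_add_mul_ediv i C.k).symm
  conv_lhs => rw [h]
  exact pts_add_mul C _ _

def stripAt (P : Set Pixel) (C : GridCycle) (i : ℤ) : Set Pixel :=
  if (C.pts (i + 1)).2 = (C.pts i).2 then hSeg P (C.pts i) else vSeg P (C.pts i)

lemma stripAt_add_mul (P : Set Pixel) (C : GridCycle) (i m : ℤ) :
    stripAt P C (i + m * C.k) = stripAt P C i := by
  unfold stripAt
  rw [show i + m * C.k + 1 = (i + 1) + m * C.k from by ring, pts_add_mul, pts_add_mul]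

lemma stripAt_emod (P : Set Pixel) (C : GridCycle) (i : ℤ) :
    stripAt P C i = stripAt P C (i % C.k) := by
  have h : i = i % C.k + (i / C.k) * C.k := by
    rw [mul_comm]; exact (Int.emod_add_mul_ediv i C.k).symm
  conv_lhs => rw [h]
  exact stripAt_add_mul P C _ _

lemma mem_stripAt_self {P : Set Pixel} {C : GridCycle} (hsub : C.covers ⊆ P) (i : ℤ) :
    C.pts i ∈ stripAt P C i := by
  have hp : C.pts i ∈ P := hsub ⟨i, rfl⟩
  unfold stripAt
  split
  · exact mem_hSeg_self hp
  · exact mem_vSeg_self hp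

lemma stripAt_subset (P : Set Pixel) (C : GridCycle) (i : ℤ) : stripAt P C i ⊆ P := by
  unfold stripAt; split
  · exact hSeg_subset
  · exact vSeg_subset

lemma stripAt_isStrip {P : Set Pixel} {C : GridCycle} (hfin : P.Finite)
    (hsub : C.covers ⊆ P) (i : ℤ) : IsStrip P (stripAt P C i) := by
  have hp : C.pts i ∈ P := hsub ⟨i, rfl⟩
  unfold stripAt; split
  · exact Or.inl (isHStrip_hSeg hfin hp)
  · exact Or.inr (isVStrip_vSeg hfin hp)

lemma stripAt_eq_of_straight {P : Set Pixel} {C : GridCycle} (hsub : C.covers ⊆ P) (i : ℤ)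
    (h : C.pts (i + 1) - C.pts i = C.pts i - C.pts (i - 1)) :
    stripAt P C i = stripAt P C (i - 1) := by
  have hidx : i - 1 + 1 = i := by ring
  have hab : Adjacent (C.pts (i - 1)) (C.pts i) := by
    have := C.adj (i - 1); rwa [hidx] at this
  have haP : C.pts (i - 1) ∈ P := hsub ⟨i - 1, rfl⟩
  have hbP : C.pts i ∈ P := hsub ⟨i, rfl⟩
  have h1 := congrArg Prod.fst h
  have h2 := congrArg Prod.snd h
  simp only [Prod.fst_sub, Prod.snd_sub] at h1 h2
  unfold stripAt
  rw [hidx]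
  rcases adj_cases hab with ⟨hy, hx⟩ | ⟨hx, hy⟩
  · rw [if_pos (by omega), if_pos hy.symm]
    refine hSeg_eq ⟨hy.symm, fun t ht => ?_⟩
    rcases (by omega : t = (C.pts (i - 1)).1 ∨ t = (C.pts i).1) with h' | h'
    · subst h'; simpa using haP
    · subst h'; rw [hy]; simpa using hbP
  · rw [if_neg (by omega), if_neg (by omega)]
    refine vSeg_eq ⟨hx.symm, fun t ht => ?_⟩
    rcases (by omega : t = (C.pts (i - 1)).2 ∨ t = (C.pts i).2) with h' | h'
    · subst h'; simpa using haP
    · subst h'; rw [hx]; simpa using hbP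

lemma straight_of_turnCost_zero {C : GridCycle} {i : ℤ} (h : C.turnCost i = 0) :
    C.pts (i + 1) - C.pts i = C.pts i - C.pts (i - 1) := by
  unfold GridCycle.turnCost at h
  split_ifs at h with h1 h2
  · exact h1
  all_goals exact absurd h (by norm_num)

lemma turnCost_add_mul (C : GridCycle) (i m : ℤ) :
    C.turnCost (i + m * C.k) = C.turnCost i := by
  unfold GridCycle.turnCost
  rw [show i + m * C.k + 1 = (i + 1) + m * C.k from by ring,
    show i + m * C.k - 1 = (i - 1) + m * C.k from by ring, pts_add_mul, pts_add_mul, pts_add_mul]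

lemma turnCost_emod (C : GridCycle) (i : ℤ) : C.turnCost i = C.turnCost (i % C.k) := by
  have h : i = i % C.k + (i / C.k) * C.k := by
    rw [mul_comm]; exact (Int.emod_add_mul_ediv i C.k).symm
  conv_lhs => rw [h]
  exact turnCost_add_mul C _ _

lemma one_le_turns (C : GridCycle) : 1 ≤ C.turns := by
  by_contra hcon
  have hz : C.turns = 0 := by omega
  have hk0 : (0 : ℤ) < (C.k : ℤ) := by have := C.two_le; exact_mod_cast by omega
  have hall : ∀ j ∈ Finset.range C.k, C.turnCost (j : ℤ) = 0 :=
    Finset.sum_eq_zero_iff.1 hz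
  have hallZ : ∀ i : ℤ, C.turnCost i = 0 := by
    intro i
    rw [turnCost_emod]
    have h1 : 0 ≤ i % C.k := Int.emod_nonneg i (by omega)
    have h2 : i % C.k < C.k := Int.emod_lt_of_pos i hk0
    have hj : ((i % C.k).toNat : ℤ) = i % C.k := Int.toNat_of_nonneg h1
    rw [← hj]
    exact hall _ (Finset.mem_range.2 (by omega))
  have hstraight : ∀ i : ℤ, C.pts (i + 1) - C.pts i = C.pts i - C.pts (i - 1) :=
    fun i => straight_of_turnCost_zero (hallZ i)
  have hv : ∀ i : ℤ, C.pts (i + 1) - C.pts i = C.pts 1 - C.pts 0 := by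
    intro i
    induction i using Int.induction_on with
    | zero => norm_num
    | succ n ih =>
      have := hstraight ((n : ℤ) + 1)
      rw [show (n : ℤ) + 1 - 1 = n from by ring] at this
      rw [this, ih]
    | pred n ih =>
      have := hstraight (-(n : ℤ))
      rw [show -(n : ℤ) - 1 = -(n : ℤ) - 1 from rfl] at this
      rw [show -(n : ℤ) - 1 + 1 = -(n : ℤ) from by ring, ← this]
      rw [show -(n : ℤ) + 1 = -(n : ℤ) + 1 from rfl] at ih
      exact ih
  have hcoord : ∀ n : ℕ, (C.pts n).1 = (C.pts 0).1 + n * ((C.pts 1).1 - (C.pts 0).1) ∧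
      (C.pts n).2 = (C.pts 0).2 + n * ((C.pts 1).2 - (C.pts 0).2) := by
    intro n
    induction n with
    | zero => simp
    | succ n ih =>
      have h := hv (n : ℤ)
      have h1 := congrArg Prod.fst h
      have h2 := congrArg Prod.snd h
      simp only [Prod.fst_sub, Prod.snd_sub] at h1 h2
      obtain ⟨ih1, ih2⟩ := ih
      constructor
      · push_cast
        linear_combination h1 + ih1
      · push_cast
        linear_combination h2 + ih2
  have hper := C.periodic 0
  rw [zero_add] at hper
  obtain ⟨hc1, hc2⟩ := hcoord C.k
  rw [hper] at hc1 hc2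
  have hv1 : (C.pts 1).1 - (C.pts 0).1 = 0 := by
    rcases mul_eq_zero.1 (show ((C.k : ℤ)) * ((C.pts 1).1 - (C.pts 0).1) = 0 from by linarith) with h | h
    · omega
    · exact h
  have hv2 : (C.pts 1).2 - (C.pts 0).2 = 0 := by
    rcases mul_eq_zero.1 (show ((C.k : ℤ)) * ((C.pts 1).2 - (C.pts 0).2) = 0 from by linarith) with h | h
    · omega
    · exact h
  have hadj := C.adj 0
  rw [zero_add] at hadj
  unfold Adjacent at hadj
  rw [show (C.pts 0).1 - (C.pts 1).1 = 0 from by omega,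
    show (C.pts 0).2 - (C.pts 1).2 = 0 from by omega] at hadj
  simp at hadj

end StripAux
namespace StripAux

noncomputable def Fc (P : Set Pixel) (C : GridCycle) : Finset (Set Pixel) :=
  (Finset.range C.k).image (fun j : ℕ => stripAt P C (j : ℤ))

noncomputable def Dc (P : Set Pixel) (C : GridCycle) : Finset ℕ :=
  (Finset.range C.k).filter (fun j : ℕ => stripAt P C (j : ℤ) ≠ stripAt P C ((j : ℤ) - 1))

lemma Dc_card_le_turns {P : Set Pixel} {C : GridCycle} (hsub : C.covers ⊆ P) :
    (Dc P C).card ≤ C.turns := by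
  have h1 : ∀ j ∈ Dc P C, 1 ≤ C.turnCost (j : ℤ) := by
    intro j hj
    rw [Dc, Finset.mem_filter] at hj
    by_contra hc
    exact hj.2 (stripAt_eq_of_straight hsub (j : ℤ)
      (straight_of_turnCost_zero (by omega)))
  calc (Dc P C).card = ∑ j ∈ Dc P C, 1 := by simp
    _ ≤ ∑ j ∈ Dc P C, C.turnCost (j : ℤ) := Finset.sum_le_sum h1
    _ ≤ ∑ j ∈ Finset.range C.k, C.turnCost (j : ℤ) :=
        Finset.sum_le_sum_of_subset (Finset.filter_subset _ _)
    _ = C.turns := rfl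

lemma stripAt_congr {P : Set Pixel} {C : GridCycle} {i j : ℤ} (h : i % C.k = j % C.k) :
    stripAt P C i = stripAt P C j := by
  rw [stripAt_emod, h, ← stripAt_emod]

lemma stripAt_congr' {P : Set Pixel} {C : GridCycle} {i j : ℤ} (h : ((C.k : ℤ)) ∣ i - j) :
    stripAt P C i = stripAt P C j :=
  stripAt_congr (Int.emod_eq_emod_iff_emod_sub_eq_zero.2 (Int.emod_eq_zero_of_dvd h))

lemma exists_Dc {P : Set Pixel} {C : GridCycle} (hd : (Dc P C).Nonempty) (i : ℤ) :
    ∃ d ∈ Dc P C, stripAt P C (d : ℤ) = stripAt P C i := by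
  have hk0 : (0 : ℤ) < (C.k : ℤ) := by have := C.two_le; exact_mod_cast by omega
  have aux : ∀ n : ℕ, ∀ i : ℤ,
      (∃ d ∈ Dc P C, stripAt P C (d : ℤ) = stripAt P C i) ∨
      stripAt P C (i - n) = stripAt P C i := by
    intro n
    induction n with
    | zero => intro i; right; simp
    | succ n ih =>
      intro i
      rcases ih i with h | h
      · exact Or.inl h
      · set j : ℕ := ((i - n) % C.k).toNat with hjdef
        have hj : (j : ℤ) = (i - n) % C.k :=
          Int.toNat_of_nonneg (Int.emod_nonneg _ (by omega))
        have hjk : j < C.k := by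
          have := Int.emod_lt_of_pos (i - n) hk0; omega
        have hdvd : ((C.k : ℤ)) ∣ (i - n) - (j : ℤ) := by
          refine ⟨(i - n) / C.k, ?_⟩
          have := Int.emod_add_mul_ediv (i - n) (C.k : ℤ)
          rw [hj]; linarith
        have hcong : stripAt P C (i - n) = stripAt P C (j : ℤ) := stripAt_congr' hdvd
        by_cases hD : j ∈ Dc P C
        · exact Or.inl ⟨j, hD, by rw [← hcong, h]⟩
        · have hjr : j ∈ Finset.range C.k := Finset.mem_range.2 hjk
          have heq : stripAt P C (j : ℤ) = stripAt P C ((j : ℤ) - 1) := by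
            by_contra hne
            exact hD (Finset.mem_filter.2 ⟨hjr, hne⟩)
          right
          have hcong2 : stripAt P C (i - (n + 1 : ℕ)) = stripAt P C ((j : ℤ) - 1) := by
            apply stripAt_congr'
            have heq2 : (i - ((n : ℕ) + 1 : ℕ)) - ((j : ℤ) - 1) = (i - n) - (j : ℤ) := by
              push_cast; ring
            rw [heq2]; exact hdvd
          rw [hcong2, ← heq, ← hcong, h]
  obtain ⟨d0, hd0⟩ := hd
  rcases aux ((i - d0) % C.k).toNat i with h | h
  · exact h
  · refine ⟨d0, hd0, ?_⟩
    rw [← h]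
    apply stripAt_congr'
    have hn : (((i - d0) % C.k).toNat : ℤ) = (i - d0) % C.k :=
      Int.toNat_of_nonneg (Int.emod_nonneg _ (by omega))
    refine ⟨-((i - d0) / C.k), ?_⟩
    have := Int.emod_add_mul_ediv (i - (d0 : ℤ)) (C.k : ℤ)
    rw [hn]
    have hr : (C.k : ℤ) * -((i - (d0 : ℤ)) / (C.k : ℤ)) = -((C.k : ℤ) * ((i - (d0 : ℤ)) / (C.k : ℤ))) := by ring
    rw [hr]; linarith

lemma Fc_card_le_turns {P : Set Pixel} {C : GridCycle} (hsub : C.covers ⊆ P) :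
    (Fc P C).card ≤ C.turns := by
  rcases (Dc P C).eq_empty_or_nonempty with hD | hD
  · have hconst : ∀ j : ℕ, j < C.k → stripAt P C (j : ℤ) = stripAt P C 0 := by
      intro j
      induction j with
      | zero => intro _; norm_num
      | succ j ih =>
        intro hj
        have hjr : (j + 1) ∈ Finset.range C.k := Finset.mem_range.2 hj
        have hnotD : (j + 1) ∉ Dc P C := by rw [hD]; exact Finset.notMem_empty _
        have heq : stripAt P C ((j + 1 : ℕ) : ℤ) = stripAt P C (((j + 1 : ℕ) : ℤ) - 1) := by
          by_contra hne
          exact hnotD (Finset.mem_filter.2 ⟨hjr, hne⟩)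
        rw [heq, show (((j + 1 : ℕ) : ℤ) - 1) = (j : ℤ) from by push_cast; ring]
        exact ih (by omega)
    have hsub1 : Fc P C ⊆ {stripAt P C 0} := by
      intro S hS
      rw [Fc, Finset.mem_image] at hS
      obtain ⟨j, hj, rfl⟩ := hS
      rw [hconst j (Finset.mem_range.1 hj)]
      exact Finset.mem_singleton_self _
    calc (Fc P C).card ≤ 1 := by
          simpa using Finset.card_le_card hsub1
      _ ≤ C.turns := one_le_turns C
  · have hsub1 : Fc P C ⊆ (Dc P C).image (fun d : ℕ => stripAt P C (d : ℤ)) := by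
      intro S hS
      rw [Fc, Finset.mem_image] at hS
      obtain ⟨j, hj, rfl⟩ := hS
      obtain ⟨d, hdD, hdeq⟩ := exists_Dc hD (j : ℤ)
      exact Finset.mem_image.2 ⟨d, hdD, hdeq⟩
    calc (Fc P C).card ≤ ((Dc P C).image (fun d : ℕ => stripAt P C (d : ℤ))).card :=
          Finset.card_le_card hsub1
      _ ≤ (Dc P C).card := Finset.card_image_le
      _ ≤ C.turns := Dc_card_le_turns hsub

lemma Fc_covers {P : Set Pixel} {C : GridCycle} (hsub : C.covers ⊆ P) :
    ∀ p ∈ C.covers, ∃ S ∈ Fc P C, p ∈ S := by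
  rintro p ⟨i, rfl⟩
  have hk0 : (0 : ℤ) < (C.k : ℤ) := by have := C.two_le; exact_mod_cast by omega
  set j : ℕ := (i % C.k).toNat with hjdef
  have hj : (j : ℤ) = i % C.k := Int.toNat_of_nonneg (Int.emod_nonneg _ (by omega))
  have hjk : j < C.k := by have := Int.emod_lt_of_pos i hk0; omega
  refine ⟨stripAt P C (j : ℤ), Finset.mem_image.2 ⟨j, Finset.mem_range.2 hjk, rfl⟩, ?_⟩
  have : stripAt P C (j : ℤ) = stripAt P C i := by
    apply stripAt_congr'
    refine ⟨-(i / C.k), ?_⟩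
    have := Int.emod_add_mul_ediv i (C.k : ℤ)
    rw [hj]; linarith
  rw [this]
  exact mem_stripAt_self hsub i

lemma Fc_strips {P : Set Pixel} {C : GridCycle} (hfin : P.Finite) (hsub : C.covers ⊆ P) :
    ∀ S ∈ Fc P C, IsStrip P S := by
  intro S hS
  rw [Fc, Finset.mem_image] at hS
  obtain ⟨j, _, rfl⟩ := hS
  exact stripAt_isStrip hfin hsub _

lemma assemble {P : Set Pixel} (hfin : P.Finite) :
    ∀ CC : List GridCycle, (∀ C ∈ CC, C.covers ⊆ P) →
    ∃ F : Finset (Set Pixel), F.card ≤ coverTurns CC ∧ (∀ S ∈ F, IsStrip P S) ∧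
      ∀ p : Pixel, (∃ C ∈ CC, p ∈ C.covers) → ∃ S ∈ F, p ∈ S := by
  intro CC
  induction CC with
  | nil => exact fun _ => ⟨∅, by simp [coverTurns], by simp, by simp⟩
  | cons C l ih =>
    intro h
    obtain ⟨F, hF1, hF2, hF3⟩ := ih (fun C' hC' => h C' (List.mem_cons_of_mem _ hC'))
    have hsub : C.covers ⊆ P := h C (List.mem_cons_self)
    refine ⟨Fc P C ∪ F, ?_, ?_, ?_⟩
    · calc (Fc P C ∪ F).card ≤ (Fc P C).card + F.card := Finset.card_union_le _ _
        _ ≤ C.turns + coverTurns l := Nat.add_le_add (Fc_card_le_turns hsub) hF1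
        _ = coverTurns (C :: l) := by simp [coverTurns]
    · intro S hS
      rcases Finset.mem_union.1 hS with hS | hS
      · exact Fc_strips hfin hsub S hS
      · exact hF2 S hS
    · rintro p ⟨C', hC', hp⟩
      rcases List.mem_cons.1 hC' with rfl | hC'
      · obtain ⟨S, hS, hpS⟩ := Fc_covers hsub p hp
        exact ⟨S, Finset.mem_union_left _ hS, hpS⟩
      · obtain ⟨S, hS, hpS⟩ := hF3 p ⟨C', hC', hp⟩
        exact ⟨S, Finset.mem_union_right _ hS, hpS⟩

end StripAux
lemma StripAux.isStrip_subset {P S : Set Pixel} (h : IsStrip P S) : S ⊆ P := by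
  rcases h with ⟨_, _, _, _, h, _, _⟩ | ⟨_, _, _, _, h, _, _⟩ <;> exact h

/-- Strip-cover lower bound: for a region `P` with at least two pixels, every
cycle cover of `P` (in particular every tour) has at least as many turns as
the minimum size of a strip cover of `P`. -/
theorem stripCover_le_cycleCover_turns (P : Set Pixel) (hP : IsRegion P)
    (h2 : 2 ≤ P.ncard) (CC : List GridCycle) (hCC : IsCycleCover P CC) :
    minStripCover P ≤ coverTurns CC := by
  classical
  obtain ⟨hfin, -, -⟩ := hP
  obtain ⟨F, hF1, hF2, hF3⟩ := StripAux.assemble hfin CC hCC.1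
  have hcover : IsStripCover P (↑F : Set (Set Pixel)) := by
    constructor
    · intro S hS
      exact hF2 S (by exact_mod_cast hS)
    · apply Set.eq_of_subset_of_subset
      · rintro p ⟨S, hS, hp⟩
        exact StripAux.isStrip_subset (hF2 S (by exact_mod_cast hS)) hp
      · intro p hp
        obtain ⟨C, hC, hpC⟩ := hCC.2 p hp
        obtain ⟨S, hS, hpS⟩ := hF3 p ⟨C, hC, hpC⟩
        exact ⟨S, by exact_mod_cast hS, hpS⟩
  have hmem : F.card ∈ {m | ∃ F', IsStripCover P F' ∧ F'.ncard = m} :=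
    ⟨↑F, hcover, Set.ncard_coe_finset F⟩
  exact (Nat.sInf_le hmem).trans hF1
end

section
/- For every rook placement R in a region P, every cycle cover of P (in particular every tour of P) has at least |R| turns. -/
namespace RookAux

lemma adj_cases {p q : Pixel} (h : Adjacent p q) :
    q - p = ((1:ℤ),(0:ℤ)) ∨ q - p = (-1,0) ∨ q - p = (0,1) ∨ q - p = (0,-1) := by
  obtain ⟨a,b⟩ := p; obtain ⟨c,d⟩ := q
  simp only [Adjacent] at h
  rw [Int.abs_eq_natAbs, Int.abs_eq_natAbs] at h
  simp only [Prod.mk_sub_mk, Prod.mk.injEq]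
  omega

lemma pts_add_int_mul (C : GridCycle) (i : ℤ) (n : ℤ) :
    C.pts (i + n * C.k) = C.pts i := by
  induction n using Int.induction_on with
  | zero => simp
  | succ n ih =>
      rw [show i + ((n:ℤ)+1) * C.k = (i + n * C.k) + C.k by ring, C.periodic, ih]
  | pred n ih =>
      have := C.periodic (i + (-(n:ℤ)-1) * C.k)
      rw [show i + (-(n:ℤ)-1) * C.k + C.k = i + (-(n:ℤ)) * C.k by ring] at this
      rw [← this]
      exact ih

lemma pts_emod (C : GridCycle) (i : ℤ) : C.pts (i % (C.k:ℤ)) = C.pts i := by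
  rw [show i % (C.k:ℤ) = i + (-(i / (C.k:ℤ))) * (C.k:ℤ) by rw [Int.emod_def]; ring,
    pts_add_int_mul]

lemma turnCost_add_mul (C : GridCycle) (i n : ℤ) :
    C.turnCost (i + n * C.k) = C.turnCost i := by
  simp only [GridCycle.turnCost]
  rw [show i + n*C.k + 1 = (i+1) + n*C.k by ring,
      show i + n*C.k - 1 = (i-1) + n*C.k by ring,
      pts_add_int_mul, pts_add_int_mul, pts_add_int_mul]

lemma turnCost_emod (C : GridCycle) (i : ℤ) :
    C.turnCost (i % (C.k:ℤ)) = C.turnCost i := by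
  rw [show i % (C.k:ℤ) = i + (-(i / (C.k:ℤ))) * (C.k:ℤ) by rw [Int.emod_def]; ring,
    turnCost_add_mul]

end RookAux
namespace RookAux

lemma straight (C : GridCycle) (i : ℤ) (t : ℕ)
    (h : ∀ s : ℕ, s < t → C.turnCost (i + 1 + s) = 0) :
    C.pts (i + 1 + t) - C.pts (i + t) = C.pts (i+1) - C.pts i ∧
    C.pts (i + 1 + t) = C.pts i + ((t:ℤ) + 1) • (C.pts (i+1) - C.pts i) := by
  induction t with
  | zero => simp
  | succ t ih =>
      obtain ⟨ih1, ih2⟩ := ih (fun s hs => h s (by omega))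
      have h0 := h t (by omega)
      simp only [GridCycle.turnCost] at h0
      split_ifs at h0 with h1 h2
      · have e1 : i + 1 + (t:ℤ) + 1 = i + 1 + ((t:ℕ)+1 : ℕ) := by push_cast; ring
        have e2 : i + 1 + (t:ℤ) - 1 = i + (t:ℤ) := by ring
        rw [e1, e2] at h1
        have key : C.pts (i + 1 + ((t:ℕ)+1:ℕ)) = C.pts (i+1+(t:ℤ)) + (C.pts (i+1) - C.pts i) := by
          rw [ih1] at h1
          have := eq_add_of_sub_eq h1
          rw [this]; abel
        constructor
        · rw [show i + ((t:ℕ)+1:ℕ) = i + 1 + (t:ℤ) by push_cast; ring, key]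
          abel
        · rw [key, ih2]
          push_cast
          rw [show ((t:ℤ)+1+1) • (C.pts (i+1) - C.pts i)
              = ((t:ℤ)+1) • (C.pts (i+1) - C.pts i) + 1 • (C.pts (i+1) - C.pts i)
              from add_smul _ _ _, one_smul, ← add_assoc]
lemma exists_turn (C : GridCycle) (i : ℤ) : ∃ m : ℕ, C.turnCost (i + 1 + m) ≠ 0 := by
  by_contra hcon
  push_neg at hcon
  have hk : 2 ≤ C.k := C.two_le
  have hs := (straight C i (C.k - 1) (fun s _ => hcon s)).2
  have e1 : i + 1 + ((C.k - 1 : ℕ) : ℤ) = i + 1 * (C.k : ℤ) := by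
    have : (1:ℕ) ≤ C.k := by omega
    push_cast [this]
    ring
  rw [e1, pts_add_int_mul] at hs
  have e2 : (((C.k - 1 : ℕ) : ℤ) + 1) = (C.k : ℤ) := by
    have : (1:ℕ) ≤ C.k := by omega
    push_cast [this]; ring
  rw [e2] at hs
  have hz : (C.k : ℤ) • (C.pts (i+1) - C.pts i) = 0 := left_eq_add.mp hs
  rcases adj_cases (C.adj i) with h4 | h4 | h4 | h4 <;>
    rw [h4] at hz <;>
    · simp only [Prod.smul_mk, smul_eq_mul, Prod.mk_eq_zero, mul_one, mul_zero, mul_neg] at hz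
      omega

lemma charge (C : GridCycle) (r : Pixel) (hr : r ∈ C.covers) :
    ∃ j : ℕ, j < C.k ∧ C.turnCost (j : ℤ) ≠ 0 ∧ ∃ m : ℕ,
      r = C.pts (j:ℤ) - (m : ℤ) • (C.pts (j:ℤ) - C.pts ((j:ℤ) - 1)) ∧
      ∀ u : ℕ, u ≤ m → C.pts (j:ℤ) - (u : ℤ) • (C.pts (j:ℤ) - C.pts ((j:ℤ) - 1)) ∈ C.covers := by
  obtain ⟨i, hi⟩ := hr
  have hex := exists_turn C i
  set t := Nat.find hex with ht
  have hturn : C.turnCost (i + 1 + (t:ℤ)) ≠ 0 := Nat.find_spec hex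
  have hmin : ∀ s : ℕ, s < t → C.turnCost (i + 1 + (s:ℤ)) = 0 := by
    intro s hs
    have := Nat.find_min hex hs
    simpa using this
  set d := C.pts (i+1) - C.pts i with hd
  have hstr : ∀ s : ℕ, s ≤ t → C.pts (i + 1 + (s:ℤ)) = C.pts i + ((s:ℤ)+1) • d :=
    fun s hs => (straight C i s (fun u hu => hmin u (lt_of_lt_of_le hu hs))).2
  set j' := i + 1 + (t:ℤ) with hj'
  have hq : C.pts j' = C.pts i + ((t:ℤ)+1) • d := hstr t le_rfl
  have hqm : C.pts (j' - 1) = C.pts i + (t:ℤ) • d := by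
    rcases Nat.eq_zero_or_pos t with h0 | h0
    · rw [hj', h0]; norm_num
    · have := hstr (t-1) (by omega)
      have e1 : i + 1 + ((t-1:ℕ):ℤ) = j' - 1 := by
        rw [hj']; push_cast [h0]; ring
      have e2 : (((t-1:ℕ):ℤ)+1) = (t:ℤ) := by push_cast [h0]; ring
      rw [e1, e2] at this
      exact this
  have hdd : C.pts j' - C.pts (j' - 1) = d := by
    rw [hq, hqm]
    rw [show ((t:ℤ)+1) • d = (t:ℤ) • d + 1 • d from add_smul _ _ _, one_smul]
    abel
  have hcov : ∀ u : ℕ, u ≤ t + 1 → C.pts j' - (u:ℤ) • d ∈ C.covers := by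
    intro u hu
    rcases Nat.eq_or_lt_of_le hu with he | hlt
    · refine ⟨i, ?_⟩
      rw [hq, he]
      push_cast
      abel
    · have hut : u ≤ t := by omega
      refine ⟨i + 1 + ((t - u : ℕ):ℤ), ?_⟩
      rw [hstr (t-u) (by omega), hq]
      have : (((t-u:ℕ):ℤ)+1) = ((t:ℤ)+1) - (u:ℤ) := by push_cast [hut]; ring
      rw [this, sub_smul]
      abel
  have hrval : r = C.pts j' - (((t+1:ℕ)):ℤ) • d := by
    rw [hq, ← hi]
    push_cast
    abel
  -- reduce j' modulo k
  have hk2 := C.two_le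
  have hkpos : (0:ℤ) < (C.k:ℤ) := by exact_mod_cast (by omega : 0 < C.k)
  set j := (j' % (C.k:ℤ)).toNat with hjdef
  have hjz : (j:ℤ) = j' % (C.k:ℤ) :=
    Int.toNat_of_nonneg (Int.emod_nonneg _ (by positivity))
  have hjlt : j < C.k := by
    have := Int.emod_lt_of_pos j' hkpos
    omega
  have hp0 : C.pts (j:ℤ) = C.pts j' := by rw [hjz, pts_emod]
  have hp1 : C.pts ((j:ℤ) - 1) = C.pts (j' - 1) := by
    rw [hjz, show j' % (C.k:ℤ) - 1 = (j' - 1) + (-(j' / (C.k:ℤ))) * (C.k:ℤ) by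
      rw [Int.emod_def]; ring, pts_add_int_mul]
  have hc0 : C.turnCost (j:ℤ) = C.turnCost j' := by rw [hjz, turnCost_emod]
  refine ⟨j, hjlt, by rw [hc0]; exact hturn, t+1, ?_, ?_⟩
  · rw [hp0, hp1, hdd]; exact hrval
  · intro u hu
    rw [hp0, hp1, hdd]
    exact hcov u hu
lemma not_mem_of_finite {P : Set Pixel} (hfin : P.Finite) (f : ℕ → Pixel)
    (hinj : Function.Injective f) : ∃ n : ℕ, f n ∉ P := by
  by_contra hcon
  push_neg at hcon
  exact (Set.infinite_of_injective_forall_mem hinj hcon) hfin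

open Classical in
lemma exists_hstrip (P : Set Pixel) (hfin : P.Finite) (y a b : ℤ) (hab : a ≤ b)
    (h : ∀ x : ℤ, a ≤ x → x ≤ b → ((x, y) : Pixel) ∈ P) :
    ∃ S : Set Pixel, IsStrip P S ∧ ∀ x : ℤ, a ≤ x → x ≤ b → ((x, y) : Pixel) ∈ S := by
  have hexL : ∃ n : ℕ, ((a - n - 1 : ℤ), y) ∉ P :=
    not_mem_of_finite hfin _ (fun n n' hnn => by
      simp only [Prod.mk.injEq] at hnn; omega)
  have hexR : ∃ n : ℕ, ((b + n + 1 : ℤ), y) ∉ P :=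
    not_mem_of_finite hfin _ (fun n n' hnn => by
      simp only [Prod.mk.injEq] at hnn; omega)
  set L := Nat.find hexL with hLdef
  set Rn := Nat.find hexR with hRdef
  have hLs : ((a - L - 1 : ℤ), y) ∉ P := Nat.find_spec hexL
  have hRs : ((b + Rn + 1 : ℤ), y) ∉ P := Nat.find_spec hexR
  have hLm : ∀ m : ℕ, m < L → ((a - m - 1 : ℤ), y) ∈ P := by
    intro m hm
    have := Nat.find_min hexL hm
    simpa using this
  have hRm : ∀ m : ℕ, m < Rn → ((b + m + 1 : ℤ), y) ∈ P := by
    intro m hm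
    have := Nat.find_min hexR hm
    simpa using this
  set ℓ : ℕ := L + (b - a).toNat + Rn with hldef
  have hcast : ((ℓ:ℕ):ℤ) = (L:ℤ) + (b - a) + Rn := by
    rw [hldef]; push_cast [Int.toNat_of_nonneg (sub_nonneg.mpr hab)]; ring
  refine ⟨{p : Pixel | p.2 = y ∧ a - L ≤ p.1 ∧ p.1 ≤ (a - (L:ℤ)) + ((ℓ:ℕ):ℤ)},
    Or.inl ⟨a - L, y, ℓ, rfl, ?_, ?_, ?_⟩, ?_⟩
  · rintro ⟨px, py⟩ ⟨h1, h2, h3⟩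
    simp only at h1 h2 h3
    subst h1
    rw [hcast] at h3
    rcases lt_or_ge px a with hpa | hpa
    · have hm : ((a - 1 - px).toNat : ℤ) = a - 1 - px := Int.toNat_of_nonneg (by omega)
      have hmL : (a - 1 - px).toNat < L := by omega
      have := hLm _ hmL
      rw [show a - ((a - 1 - px).toNat : ℤ) - 1 = px by omega] at this
      exact this
    rcases le_or_gt px b with hpb | hpb
    · exact h px hpa hpb
    · have hm : ((px - b - 1).toNat : ℤ) = px - b - 1 := Int.toNat_of_nonneg (by omega)
      have hmR : (px - b - 1).toNat < Rn := by omega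
      have := hRm _ hmR
      rw [show b + ((px - b - 1).toNat : ℤ) + 1 = px by omega] at this
      exact this
  · exact hLs
  · rw [show a - (L:ℤ) + ((ℓ:ℕ):ℤ) + 1 = b + Rn + 1 by rw [hcast]; ring]
    exact hRs
  · intro x hx1 hx2
    refine ⟨rfl, by omega, by rw [hcast]; omega⟩

open Classical in
lemma exists_vstrip (P : Set Pixel) (hfin : P.Finite) (x a b : ℤ) (hab : a ≤ b)
    (h : ∀ y : ℤ, a ≤ y → y ≤ b → ((x, y) : Pixel) ∈ P) :
    ∃ S : Set Pixel, IsStrip P S ∧ ∀ y : ℤ, a ≤ y → y ≤ b → ((x, y) : Pixel) ∈ S := by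
  have hexL : ∃ n : ℕ, (x, (a - n - 1 : ℤ)) ∉ P :=
    not_mem_of_finite hfin _ (fun n n' hnn => by
      simp only [Prod.mk.injEq] at hnn; omega)
  have hexR : ∃ n : ℕ, (x, (b + n + 1 : ℤ)) ∉ P :=
    not_mem_of_finite hfin _ (fun n n' hnn => by
      simp only [Prod.mk.injEq] at hnn; omega)
  set L := Nat.find hexL with hLdef
  set Rn := Nat.find hexR with hRdef
  have hLs : (x, (a - L - 1 : ℤ)) ∉ P := Nat.find_spec hexL
  have hRs : (x, (b + Rn + 1 : ℤ)) ∉ P := Nat.find_spec hexR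
  have hLm : ∀ m : ℕ, m < L → (x, (a - m - 1 : ℤ)) ∈ P := by
    intro m hm
    have := Nat.find_min hexL hm
    simpa using this
  have hRm : ∀ m : ℕ, m < Rn → (x, (b + m + 1 : ℤ)) ∈ P := by
    intro m hm
    have := Nat.find_min hexR hm
    simpa using this
  set ℓ : ℕ := L + (b - a).toNat + Rn with hldef
  have hcast : ((ℓ:ℕ):ℤ) = (L:ℤ) + (b - a) + Rn := by
    rw [hldef]; push_cast [Int.toNat_of_nonneg (sub_nonneg.mpr hab)]; ring
  refine ⟨{p : Pixel | p.1 = x ∧ a - L ≤ p.2 ∧ p.2 ≤ (a - (L:ℤ)) + ((ℓ:ℕ):ℤ)},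
    Or.inr ⟨x, a - L, ℓ, rfl, ?_, ?_, ?_⟩, ?_⟩
  · rintro ⟨px, py⟩ ⟨h1, h2, h3⟩
    simp only at h1 h2 h3
    subst h1
    rw [hcast] at h3
    rcases lt_or_ge py a with hpa | hpa
    · have hm : ((a - 1 - py).toNat : ℤ) = a - 1 - py := Int.toNat_of_nonneg (by omega)
      have hmL : (a - 1 - py).toNat < L := by omega
      have := hLm _ hmL
      rw [show a - ((a - 1 - py).toNat : ℤ) - 1 = py by omega] at this
      exact this
    rcases le_or_gt py b with hpb | hpb
    · exact h py hpa hpb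
    · have hm : ((py - b - 1).toNat : ℤ) = py - b - 1 := Int.toNat_of_nonneg (by omega)
      have hmR : (py - b - 1).toNat < Rn := by omega
      have := hRm _ hmR
      rw [show b + ((py - b - 1).toNat : ℤ) + 1 = py by omega] at this
      exact this
  · exact hLs
  · rw [show a - (L:ℤ) + ((ℓ:ℕ):ℤ) + 1 = b + Rn + 1 by rw [hcast]; ring]
    exact hRs
  · intro yy hy1 hy2
    refine ⟨rfl, by omega, by rw [hcast]; omega⟩

end RookAux
namespace RookAux

lemma smul_pix (u c1 c2 : ℤ) (q : Pixel) :
    q - u • ((c1, c2) : Pixel) = (q.1 - u * c1, q.2 - u * c2) := by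
  obtain ⟨q1, q2⟩ := q
  simp [Prod.smul_mk, Prod.mk_sub_mk, smul_eq_mul]

lemma common_strip (P : Set Pixel) (hfin : P.Finite) (q d : Pixel)
    (hd : d = ((1:ℤ),(0:ℤ)) ∨ d = (-1,0) ∨ d = (0,1) ∨ d = (0,-1))
    (m m' : ℕ) (hm : ∀ u : ℕ, u ≤ m → q - (u:ℤ) • d ∈ P)
    (hm' : ∀ u : ℕ, u ≤ m' → q - (u:ℤ) • d ∈ P) :
    ∃ S, IsStrip P S ∧ q - (m:ℤ) • d ∈ S ∧ q - (m':ℤ) • d ∈ S := by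
  set M := max m m' with hM
  have hseg : ∀ u : ℕ, u ≤ M → q - (u:ℤ) • d ∈ P := by
    intro u hu
    rcases le_max_iff.mp hu with h | h
    · exact hm u h
    · exact hm' u h
  rcases hd with rfl | rfl | rfl | rfl
  · obtain ⟨S, hS, hmem⟩ := exists_hstrip P hfin q.2 (q.1 - M) q.1 (by omega)
      (fun z hz1 hz2 => by
        have hu : ((q.1 - z).toNat : ℤ) = q.1 - z := Int.toNat_of_nonneg (by omega)
        have := hseg (q.1 - z).toNat (by omega)
        rw [smul_pix] at this
        rw [show ((z : ℤ), q.2) = (q.1 - ((q.1 - z).toNat:ℤ) * 1, q.2 - ((q.1 - z).toNat:ℤ) * 0)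
          by rw [Prod.mk.injEq]; omega]
        exact this)
    refine ⟨S, hS, ?_, ?_⟩
    · rw [smul_pix, show (q.1 - (m:ℤ)*1, q.2 - (m:ℤ)*0) = ((q.1 - m:ℤ), q.2)
        by rw [Prod.mk.injEq]; omega]
      exact hmem _ (by omega) (by omega)
    · rw [smul_pix, show (q.1 - (m':ℤ)*1, q.2 - (m':ℤ)*0) = ((q.1 - m':ℤ), q.2)
        by rw [Prod.mk.injEq]; omega]
      exact hmem _ (by omega) (by omega)
  · obtain ⟨S, hS, hmem⟩ := exists_hstrip P hfin q.2 q.1 (q.1 + M) (by omega)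
      (fun z hz1 hz2 => by
        have hu : ((z - q.1).toNat : ℤ) = z - q.1 := Int.toNat_of_nonneg (by omega)
        have := hseg (z - q.1).toNat (by omega)
        rw [smul_pix] at this
        rw [show ((z : ℤ), q.2) = (q.1 - ((z - q.1).toNat:ℤ) * (-1), q.2 - ((z - q.1).toNat:ℤ) * 0)
          by rw [Prod.mk.injEq]; omega]
        exact this)
    refine ⟨S, hS, ?_, ?_⟩
    · rw [smul_pix, show (q.1 - (m:ℤ)*(-1), q.2 - (m:ℤ)*0) = ((q.1 + m:ℤ), q.2)
        by rw [Prod.mk.injEq]; omega]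
      exact hmem _ (by omega) (by omega)
    · rw [smul_pix, show (q.1 - (m':ℤ)*(-1), q.2 - (m':ℤ)*0) = ((q.1 + m':ℤ), q.2)
        by rw [Prod.mk.injEq]; omega]
      exact hmem _ (by omega) (by omega)
  · obtain ⟨S, hS, hmem⟩ := exists_vstrip P hfin q.1 (q.2 - M) q.2 (by omega)
      (fun z hz1 hz2 => by
        have hu : ((q.2 - z).toNat : ℤ) = q.2 - z := Int.toNat_of_nonneg (by omega)
        have := hseg (q.2 - z).toNat (by omega)
        rw [smul_pix] at this
        rw [show (q.1, (z : ℤ)) = (q.1 - ((q.2 - z).toNat:ℤ) * 0, q.2 - ((q.2 - z).toNat:ℤ) * 1)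
          by rw [Prod.mk.injEq]; omega]
        exact this)
    refine ⟨S, hS, ?_, ?_⟩
    · rw [smul_pix, show (q.1 - (m:ℤ)*0, q.2 - (m:ℤ)*1) = (q.1, (q.2 - m:ℤ))
        by rw [Prod.mk.injEq]; omega]
      exact hmem _ (by omega) (by omega)
    · rw [smul_pix, show (q.1 - (m':ℤ)*0, q.2 - (m':ℤ)*1) = (q.1, (q.2 - m':ℤ))
        by rw [Prod.mk.injEq]; omega]
      exact hmem _ (by omega) (by omega)
  · obtain ⟨S, hS, hmem⟩ := exists_vstrip P hfin q.1 q.2 (q.2 + M) (by omega)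
      (fun z hz1 hz2 => by
        have hu : ((z - q.2).toNat : ℤ) = z - q.2 := Int.toNat_of_nonneg (by omega)
        have := hseg (z - q.2).toNat (by omega)
        rw [smul_pix] at this
        rw [show (q.1, (z : ℤ)) = (q.1 - ((z - q.2).toNat:ℤ) * 0, q.2 - ((z - q.2).toNat:ℤ) * (-1))
          by rw [Prod.mk.injEq]; omega]
        exact this)
    refine ⟨S, hS, ?_, ?_⟩
    · rw [smul_pix, show (q.1 - (m:ℤ)*0, q.2 - (m:ℤ)*(-1)) = (q.1, (q.2 + m:ℤ))
        by rw [Prod.mk.injEq]; omega]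
      exact hmem _ (by omega) (by omega)
    · rw [smul_pix, show (q.1 - (m':ℤ)*0, q.2 - (m':ℤ)*(-1)) = (q.1, (q.2 + m':ℤ))
        by rw [Prod.mk.injEq]; omega]
      exact hmem _ (by omega) (by omega)

end RookAux
namespace RookAux

def GoodCharge (CC : List GridCycle) (r : Pixel) (x : (_ : Fin CC.length) × ℕ) : Prop :=
  x.2 < (CC.get x.1).k ∧ (CC.get x.1).turnCost (x.2:ℤ) ≠ 0 ∧ ∃ m : ℕ,
    r = (CC.get x.1).pts (x.2:ℤ)
        - (m:ℤ) • ((CC.get x.1).pts (x.2:ℤ) - (CC.get x.1).pts ((x.2:ℤ)-1)) ∧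
    ∀ u : ℕ, u ≤ m → (CC.get x.1).pts (x.2:ℤ)
        - (u:ℤ) • ((CC.get x.1).pts (x.2:ℤ) - (CC.get x.1).pts ((x.2:ℤ)-1)) ∈ (CC.get x.1).covers

lemma goodCharge_exists (CC : List GridCycle) (r : Pixel)
    (hr : ∃ C ∈ CC, r ∈ C.covers) : ∃ x, GoodCharge CC r x := by
  obtain ⟨C, hC, hrc⟩ := hr
  obtain ⟨n, hn⟩ := List.get_of_mem hC
  obtain ⟨j, hj, hcost, m, hm, hcov⟩ := charge C r hrc
  refine ⟨⟨n, j⟩, ?_⟩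
  rw [GoodCharge]
  simp only [hn]
  exact ⟨hj, hcost, m, hm, hcov⟩

lemma goodCharge_inj (P : Set Pixel) (hfin : P.Finite) (R : Set Pixel)
    (hR : IsRookPlacement P R) (CC : List GridCycle)
    (hsub : ∀ C ∈ CC, C.covers ⊆ P) (r r' : Pixel) (hr : r ∈ R) (hr' : r' ∈ R)
    (x : (_ : Fin CC.length) × ℕ)
    (g : GoodCharge CC r x) (g' : GoodCharge CC r' x) : r = r' := by
  by_contra hne
  set C := CC.get x.1 with hC
  have hsubP : C.covers ⊆ P := hsub C (CC.get_mem _)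
  obtain ⟨-, -, m, hm, hcov⟩ := g
  obtain ⟨-, -, m', hm', hcov'⟩ := g'
  set q := C.pts (x.2:ℤ) with hq
  set d := q - C.pts ((x.2:ℤ)-1) with hd
  have hd4 : d = ((1:ℤ),(0:ℤ)) ∨ d = (-1,0) ∨ d = (0,1) ∨ d = (0,-1) := by
    have := adj_cases (C.adj ((x.2:ℤ)-1))
    rw [show (x.2:ℤ) - 1 + 1 = (x.2:ℤ) by ring] at this
    exact this
  obtain ⟨S, hS, hm1, hm2⟩ := common_strip P hfin q d hd4 m m'
    (fun u hu => hsubP (hcov u hu)) (fun u hu => hsubP (hcov' u hu))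
  refine hR.2 r hr r' hr' hne ⟨S, hS, ?_, ?_⟩
  · rw [hm]; exact hm1
  · rw [hm']; exact hm2

lemma sum_turns (CC : List GridCycle) :
    coverTurns CC = ∑ n : Fin CC.length, (CC.get n).turns := by
  rw [coverTurns]
  conv_lhs => rw [← List.ofFn_get CC]
  rw [List.map_ofFn, List.sum_ofFn]
  rfl

end RookAux
/-- Rook-placement lower bound: for every rook placement `R` in a region `P`,
every cycle cover of `P` (in particular every tour) has at least `|R|` turns. -/
theorem rookPlacement_le_cycleCover_turns (P : Set Pixel) (hP : IsRegion P)
    (R : Set Pixel) (hR : IsRookPlacement P R)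
    (CC : List GridCycle) (hCC : IsCycleCover P CC) :
    R.ncard ≤ coverTurns CC := by
  classical
  rcases Set.eq_empty_or_nonempty R with hRe | ⟨r0, hr0⟩
  · simp [hRe]
  obtain ⟨hPfin, -, -⟩ := hP
  have hRsub := hR.1
  have hRfin : R.Finite := hPfin.subset hRsub
  have hGood : ∀ r ∈ R, ∃ x, RookAux.GoodCharge CC r x :=
    fun r hr => RookAux.goodCharge_exists CC r (hCC.2 r (hRsub hr))
  choose gfun hg using hGood
  let g : Pixel → (_ : Fin CC.length) × ℕ := fun r => if h : r ∈ R then gfun r h else gfun r0 hr0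
  have hgR : ∀ r (hr : r ∈ R), RookAux.GoodCharge CC r (g r) := fun r hr => by
    simp only [g, dif_pos hr]; exact hg r hr
  set Tn : Fin CC.length → Finset ℕ := fun n => (Finset.range (CC.get n).k).filter
      (fun j : ℕ => (CC.get n).turnCost (j:ℤ) ≠ 0) with hTn
  set T : Finset ((_ : Fin CC.length) × ℕ) := Finset.univ.sigma Tn with hT
  have hmaps : ∀ r ∈ hRfin.toFinset, g r ∈ T := by
    intro r hr
    rw [Set.Finite.mem_toFinset] at hr
    obtain ⟨h1, h2, -⟩ := hgR r hr
    simp only [hT, hTn, Finset.mem_sigma, Finset.mem_univ, Finset.mem_filter, Finset.mem_range,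
      true_and]
    exact ⟨h1, h2⟩
  have hinj : Set.InjOn g hRfin.toFinset := by
    intro r hr r' hr' heq
    have hr1 : r ∈ R := by simpa [Set.Finite.mem_toFinset] using hr
    have hr2 : r' ∈ R := by simpa [Set.Finite.mem_toFinset] using hr'
    exact RookAux.goodCharge_inj P hPfin R hR CC hCC.1 r r' hr1 hr2 (g r) (hgR r hr1)
      (heq ▸ hgR r' hr2)
  have h1 : R.ncard ≤ T.card := by
    rw [Set.ncard_eq_toFinset_card R hRfin]
    exact Finset.card_le_card_of_injOn g hmaps hinj
  have h3 : ∀ n : Fin CC.length, (Tn n).card ≤ (CC.get n).turns := by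
    intro n
    rw [GridCycle.turns, hTn]
    calc ((Finset.range (CC.get n).k).filter (fun j : ℕ => (CC.get n).turnCost (j:ℤ) ≠ 0)).card
        = ∑ j ∈ (Finset.range (CC.get n).k).filter
            (fun j : ℕ => (CC.get n).turnCost (j:ℤ) ≠ 0), 1 :=
          Finset.card_eq_sum_ones _
      _ ≤ ∑ j ∈ (Finset.range (CC.get n).k).filter
            (fun j : ℕ => (CC.get n).turnCost (j:ℤ) ≠ 0), (CC.get n).turnCost (j:ℤ) :=
          Finset.sum_le_sum (fun j hj =>
            Nat.one_le_iff_ne_zero.mpr (Finset.mem_filter.mp hj).2)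
      _ ≤ ∑ j ∈ Finset.range (CC.get n).k, (CC.get n).turnCost (j:ℤ) :=
          Finset.sum_le_sum_of_subset (Finset.filter_subset _ _)
  calc R.ncard ≤ T.card := h1
    _ = ∑ n : Fin CC.length, (Tn n).card := Finset.card_sigma _ _
    _ ≤ ∑ n : Fin CC.length, (CC.get n).turns := Finset.sum_le_sum (fun n _ => h3 n)
    _ = coverTurns CC := (RookAux.sum_turns CC).symm
end

section
/- For every region P, the minimum size of a strip cover of P equals the maximum size of a rook placement in P. -/
open Finset in
lemma koenig {α β γ : Type} (E : Finset γ) (f : γ → α) (g : γ → β) :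
    ∃ (M : Finset γ) (CA : Finset α) (CB : Finset β),
      M ⊆ E ∧ Set.InjOn f ↑M ∧ Set.InjOn g ↑M ∧
      (∀ a ∈ CA, ∃ e ∈ E, f e = a) ∧ (∀ b ∈ CB, ∃ e ∈ E, g e = b) ∧
      (∀ e ∈ E, f e ∈ CA ∨ g e ∈ CB) ∧ CA.card + CB.card ≤ M.card := by
  classical
  set A := E.image f with hA
  set N : α → Finset β := fun a => (E.filter (fun e => f e = a)).image g with hN
  set d := A.powerset.sup (fun S => S.card - (S.biUnion N).card) with hd
  obtain ⟨S₀, hS₀A, hS₀⟩ : ∃ S₀, S₀ ⊆ A ∧ S₀.card = (S₀.biUnion N).card + d := by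
    rcases Nat.eq_zero_or_pos d with h0 | hpos
    · exact ⟨∅, by simp, by simp [h0]⟩
    · obtain ⟨S₀, hmem, hSup⟩ := Finset.exists_mem_eq_sup A.powerset ⟨∅, by simp⟩
        (fun S => S.card - (S.biUnion N).card)
      rw [← hd] at hSup
      exact ⟨S₀, Finset.mem_powerset.mp hmem, by omega⟩
  -- Hall's theorem with d dummy vertices
  set t : {x // x ∈ A} → Finset (β ⊕ Fin d) :=
    fun a => (N ↑a).image Sum.inl ∪ (Finset.univ : Finset (Fin d)).image Sum.inr with ht
  have hallCond : ∀ s : Finset {x // x ∈ A}, s.card ≤ (s.biUnion t).card := by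
    intro s
    rcases s.eq_empty_or_nonempty with rfl | hs
    · simp
    · set S : Finset α := s.image Subtype.val with hS
      have hScard : S.card = s.card := Finset.card_image_of_injective s Subtype.val_injective
      have hSA : S ⊆ A := by
        intro a ha; obtain ⟨a', _, rfl⟩ := Finset.mem_image.mp ha; exact a'.2
      have hdef : S.card - (S.biUnion N).card ≤ d := by
        have := Finset.le_sup (f := fun S => S.card - (S.biUnion N).card)
          (Finset.mem_powerset.mpr hSA)
        rw [← hd] at this
        exact this
      have hsub : ((S.biUnion N).image Sum.inl ∪
          (Finset.univ : Finset (Fin d)).image Sum.inr) ⊆ s.biUnion t := by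
        intro x hx
        rcases Finset.mem_union.mp hx with hx | hx
        · obtain ⟨b, hb, rfl⟩ := Finset.mem_image.mp hx
          obtain ⟨a, haS, hbN⟩ := Finset.mem_biUnion.mp hb
          obtain ⟨a', ha's, rfl⟩ := Finset.mem_image.mp haS
          exact Finset.mem_biUnion.mpr
            ⟨a', ha's, Finset.mem_union_left _ (Finset.mem_image_of_mem _ hbN)⟩
        · obtain ⟨a', ha's⟩ := hs
          exact Finset.mem_biUnion.mpr ⟨a', ha's, Finset.mem_union_right _ hx⟩
      have hdisj : Disjoint ((S.biUnion N).image Sum.inl)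
          ((Finset.univ : Finset (Fin d)).image Sum.inr) := by
        simp [Finset.disjoint_left]
      have hcard : (S.biUnion N).card + d ≤ (s.biUnion t).card := by
        have h1 := Finset.card_le_card hsub
        rw [Finset.card_union_of_disjoint hdisj,
          Finset.card_image_of_injective _ Sum.inl_injective,
          Finset.card_image_of_injective _ Sum.inr_injective] at h1
        simpa using h1
      omega
  obtain ⟨r, hrinj, hrt⟩ := (Finset.all_card_le_biUnion_card_iff_exists_injective t).mp hallCond
  set A₁ : Finset {x // x ∈ A} := Finset.univ.filter (fun a => (r a).isLeft) with hA₁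
  have hPa : ∀ a ∈ A₁, ∃ e, e ∈ E ∧ f e = ↑a ∧ Sum.inl (g e) = r a := by
    intro a ha
    have hL : (r a).isLeft := (Finset.mem_filter.mp ha).2
    have := hrt a
    rcases hra : r a with b | c
    · rw [hra] at this
      rcases Finset.mem_union.mp this with h | h
      · obtain ⟨b', hb', hbe⟩ := Finset.mem_image.mp h
        obtain ⟨e, he, rfl⟩ := Finset.mem_image.mp hb'
        have heE := (Finset.mem_filter.mp he).1
        have hef := (Finset.mem_filter.mp he).2
        exact ⟨e, heE, hef, by rw [Sum.inl.injEq] at hbe; rw [hbe]⟩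
      · obtain ⟨c, _, hc⟩ := Finset.mem_image.mp h
        exact absurd hc (by simp)
    · rw [hra] at hL; simp at hL
  choose edge hedgeE hedgef hedgeg using hPa
  set M : Finset γ := A₁.attach.image (fun a => edge a.1 a.2) with hM
  have hfM : ∀ a : {x // x ∈ A₁}, f (edge a.1 a.2) = (a.1 : α) := fun a => hedgef a.1 a.2
  have hinj : Function.Injective (fun a : {x // x ∈ A₁} => edge a.1 a.2) := by
    intro a b hab
    have hab' : edge a.1 a.2 = edge b.1 b.2 := hab
    have h2 : (a.1 : α) = (b.1 : α) := by
      have := congrArg f hab'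
      rw [hfM a, hfM b] at this
      exact this
    exact Subtype.ext (Subtype.ext h2)
  have hMcard : M.card = A₁.card := by
    rw [hM, Finset.card_image_of_injective _ hinj, Finset.card_attach]
  refine ⟨M, A \ S₀, S₀.biUnion N, ?_, ?_, ?_, ?_, ?_, ?_, ?_⟩
  · intro e he
    obtain ⟨a, _, rfl⟩ := Finset.mem_image.mp he
    exact hedgeE a.1 a.2
  · intro x hx y hy hxy
    obtain ⟨a, _, rfl⟩ := Finset.mem_image.mp (Finset.mem_coe.mp hx)
    obtain ⟨b, _, rfl⟩ := Finset.mem_image.mp (Finset.mem_coe.mp hy)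
    have h2 : (a.1 : α) = (b.1 : α) := by
      rw [hfM a, hfM b] at hxy
      exact hxy
    exact congrArg (fun z : {x // x ∈ A₁} => edge z.1 z.2)
      (Subtype.ext (Subtype.ext h2))
  · intro x hx y hy hxy
    obtain ⟨a, _, rfl⟩ := Finset.mem_image.mp (Finset.mem_coe.mp hx)
    obtain ⟨b, _, rfl⟩ := Finset.mem_image.mp (Finset.mem_coe.mp hy)
    have hra : r a.1 = r b.1 := by
      rw [← hedgeg a.1 a.2, ← hedgeg b.1 b.2, hxy]
    exact congrArg (fun z : {x // x ∈ A₁} => edge z.1 z.2)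
      (Subtype.ext (hrinj hra))
  · intro a ha
    have haA : a ∈ A := (Finset.mem_sdiff.mp ha).1
    obtain ⟨e, he, rfl⟩ := Finset.mem_image.mp haA
    exact ⟨e, he, rfl⟩
  · intro b hb
    obtain ⟨a, _, hbN⟩ := Finset.mem_biUnion.mp hb
    obtain ⟨e, he, rfl⟩ := Finset.mem_image.mp hbN
    exact ⟨e, (Finset.mem_filter.mp he).1, rfl⟩
  · intro e he
    by_cases hfe : f e ∈ S₀
    · right
      exact Finset.mem_biUnion.mpr ⟨f e, hfe,
        Finset.mem_image.mpr ⟨e, Finset.mem_filter.mpr ⟨he, rfl⟩, rfl⟩⟩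
    · left
      exact Finset.mem_sdiff.mpr ⟨Finset.mem_image_of_mem f he, hfe⟩
  · -- cardinality count
    set A₂ : Finset {x // x ∈ A} := Finset.univ.filter (fun a => ¬ (r a).isLeft) with hA₂
    have hsplit : A₁.card + A₂.card = A.card := by
      rw [hA₁, hA₂, Finset.card_filter_add_card_filter_not]
      exact Fintype.card_coe A
    have hA₂d : A₂.card ≤ d := by
      have hc : ∀ a ∈ A₂, ∃ c : Fin d, r a = Sum.inr c := by
        intro a ha
        rcases hra : r a with b | c
        · exact absurd (by rw [hra]; rfl) (Finset.mem_filter.mp ha).2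
        · exact ⟨c, rfl⟩
      have h1 : A₂.image r ⊆ (Finset.univ : Finset (Fin d)).image Sum.inr := by
        intro x hx
        obtain ⟨a, ha, rfl⟩ := Finset.mem_image.mp hx
        obtain ⟨c, hcc⟩ := hc a ha
        rw [hcc]
        exact Finset.mem_image_of_mem _ (Finset.mem_univ c)
      have h2 := Finset.card_le_card h1
      rw [Finset.card_image_of_injective _ hrinj,
        Finset.card_image_of_injective _ Sum.inr_injective,
        Finset.card_univ, Fintype.card_fin] at h2
      exact h2
    have hCA : (A \ S₀).card = A.card - S₀.card := Finset.card_sdiff_of_subset hS₀A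
    have hle : S₀.card ≤ A.card := Finset.card_le_card hS₀A
    omega

lemma exists_hstrip {P : Set Pixel} (hP : P.Finite) {p : Pixel} (hp : p ∈ P) :
    ∃ S, IsHStrip P S ∧ p ∈ S := by
  classical
  have hL : ∃ n : ℕ, ((p.1 - ((n : ℤ) + 1), p.2) : Pixel) ∉ P := by
    by_contra h
    push_neg at h
    have hinj : Function.Injective (fun n : ℕ => ((p.1 - ((n : ℤ) + 1), p.2) : Pixel)) := by
      intro m n hmn
      simp only [Prod.mk.injEq] at hmn
      omega
    exact (Set.infinite_range_of_injective hinj) (hP.subset (Set.range_subset_iff.mpr h))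
  have hR : ∃ n : ℕ, ((p.1 + ((n : ℤ) + 1), p.2) : Pixel) ∉ P := by
    by_contra h
    push_neg at h
    have hinj : Function.Injective (fun n : ℕ => ((p.1 + ((n : ℤ) + 1), p.2) : Pixel)) := by
      intro m n hmn
      simp only [Prod.mk.injEq] at hmn
      omega
    exact (Set.infinite_range_of_injective hinj) (hP.subset (Set.range_subset_iff.mpr h))
  set a := Nat.find hL with hadef
  set b := Nat.find hR with hbdef
  have ha1 : ((p.1 - ((a : ℤ) + 1), p.2) : Pixel) ∉ P := Nat.find_spec hL
  have hb1 : ((p.1 + ((b : ℤ) + 1), p.2) : Pixel) ∉ P := Nat.find_spec hR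
  have ha2 : ∀ z : ℤ, p.1 - a ≤ z → z ≤ p.1 → ((z, p.2) : Pixel) ∈ P := by
    intro z h1 h2
    rcases eq_or_lt_of_le h2 with heq | hlt
    · rw [heq]; exact hp
    · obtain ⟨m, hm⟩ : ∃ m : ℕ, (m : ℤ) = p.1 - z - 1 :=
        ⟨(p.1 - z - 1).toNat, Int.toNat_of_nonneg (by omega)⟩
      have hmlt : m < a := by omega
      have := not_not.mp (Nat.find_min hL hmlt)
      have hz : p.1 - ((m : ℤ) + 1) = z := by omega
      rwa [hz] at this
  have hb2 : ∀ z : ℤ, p.1 ≤ z → z ≤ p.1 + b → ((z, p.2) : Pixel) ∈ P := by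
    intro z h1 h2
    rcases eq_or_lt_of_le h1 with heq | hlt
    · rw [← heq]; exact hp
    · obtain ⟨m, hm⟩ : ∃ m : ℕ, (m : ℤ) = z - p.1 - 1 :=
        ⟨(z - p.1 - 1).toNat, Int.toNat_of_nonneg (by omega)⟩
      have hmlt : m < b := by omega
      have := not_not.mp (Nat.find_min hR hmlt)
      have hz : p.1 + ((m : ℤ) + 1) = z := by omega
      rwa [hz] at this
  refine ⟨{q : Pixel | q.2 = p.2 ∧ p.1 - (a : ℤ) ≤ q.1 ∧ q.1 ≤ p.1 - (a : ℤ) + ((a + b : ℕ) : ℤ)},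
    ⟨p.1 - (a : ℤ), p.2, a + b, rfl, ?_, ?_, ?_⟩, ?_⟩
  · intro q hq
    obtain ⟨hq2, hq3, hq4⟩ := hq
    have hq4' : q.1 ≤ p.1 + (b : ℤ) := by push_cast at hq4; omega
    have hmem : ((q.1, p.2) : Pixel) ∈ P := by
      rcases le_or_gt q.1 p.1 with h | h
      · exact ha2 q.1 hq3 h
      · exact hb2 q.1 h.le hq4'
    rw [← hq2] at hmem
    exact hmem
  · have h : p.1 - (a : ℤ) - 1 = p.1 - ((a : ℤ) + 1) := by ring
    rw [h]; exact ha1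
  · have h : p.1 - (a : ℤ) + ((a + b : ℕ) : ℤ) + 1 = p.1 + ((b : ℤ) + 1) := by push_cast; ring
    rw [h]; exact hb1
  · exact ⟨rfl, by omega, by push_cast; omega⟩

lemma exists_vstrip {P : Set Pixel} (hP : P.Finite) {p : Pixel} (hp : p ∈ P) :
    ∃ S, IsVStrip P S ∧ p ∈ S := by
  classical
  have hL : ∃ n : ℕ, ((p.1, p.2 - ((n : ℤ) + 1)) : Pixel) ∉ P := by
    by_contra h
    push_neg at h
    have hinj : Function.Injective (fun n : ℕ => ((p.1, p.2 - ((n : ℤ) + 1)) : Pixel)) := by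
      intro m n hmn
      simp only [Prod.mk.injEq] at hmn
      omega
    exact (Set.infinite_range_of_injective hinj) (hP.subset (Set.range_subset_iff.mpr h))
  have hR : ∃ n : ℕ, ((p.1, p.2 + ((n : ℤ) + 1)) : Pixel) ∉ P := by
    by_contra h
    push_neg at h
    have hinj : Function.Injective (fun n : ℕ => ((p.1, p.2 + ((n : ℤ) + 1)) : Pixel)) := by
      intro m n hmn
      simp only [Prod.mk.injEq] at hmn
      omega
    exact (Set.infinite_range_of_injective hinj) (hP.subset (Set.range_subset_iff.mpr h))
  set a := Nat.find hL with hadef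
  set b := Nat.find hR with hbdef
  have ha1 : ((p.1, p.2 - ((a : ℤ) + 1)) : Pixel) ∉ P := Nat.find_spec hL
  have hb1 : ((p.1, p.2 + ((b : ℤ) + 1)) : Pixel) ∉ P := Nat.find_spec hR
  have ha2 : ∀ z : ℤ, p.2 - a ≤ z → z ≤ p.2 → ((p.1, z) : Pixel) ∈ P := by
    intro z h1 h2
    rcases eq_or_lt_of_le h2 with heq | hlt
    · rw [heq]; exact hp
    · obtain ⟨m, hm⟩ : ∃ m : ℕ, (m : ℤ) = p.2 - z - 1 :=
        ⟨(p.2 - z - 1).toNat, Int.toNat_of_nonneg (by omega)⟩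
      have hmlt : m < a := by omega
      have := not_not.mp (Nat.find_min hL hmlt)
      have hz : p.2 - ((m : ℤ) + 1) = z := by omega
      rwa [hz] at this
  have hb2 : ∀ z : ℤ, p.2 ≤ z → z ≤ p.2 + b → ((p.1, z) : Pixel) ∈ P := by
    intro z h1 h2
    rcases eq_or_lt_of_le h1 with heq | hlt
    · rw [← heq]; exact hp
    · obtain ⟨m, hm⟩ : ∃ m : ℕ, (m : ℤ) = z - p.2 - 1 :=
        ⟨(z - p.2 - 1).toNat, Int.toNat_of_nonneg (by omega)⟩
      have hmlt : m < b := by omega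
      have := not_not.mp (Nat.find_min hR hmlt)
      have hz : p.2 + ((m : ℤ) + 1) = z := by omega
      rwa [hz] at this
  refine ⟨{q : Pixel | q.1 = p.1 ∧ p.2 - (a : ℤ) ≤ q.2 ∧ q.2 ≤ p.2 - (a : ℤ) + ((a + b : ℕ) : ℤ)},
    ⟨p.1, p.2 - (a : ℤ), a + b, rfl, ?_, ?_, ?_⟩, ?_⟩
  · intro q hq
    obtain ⟨hq2, hq3, hq4⟩ := hq
    have hq4' : q.2 ≤ p.2 + (b : ℤ) := by push_cast at hq4; omega
    have hmem : ((p.1, q.2) : Pixel) ∈ P := by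
      rcases le_or_gt q.2 p.2 with h | h
      · exact ha2 q.2 hq3 h
      · exact hb2 q.2 h.le hq4'
    rw [← hq2] at hmem
    exact hmem
  · have h : p.2 - (a : ℤ) - 1 = p.2 - ((a : ℤ) + 1) := by ring
    rw [h]; exact ha1
  · have h : p.2 - (a : ℤ) + ((a + b : ℕ) : ℤ) + 1 = p.2 + ((b : ℤ) + 1) := by push_cast; ring
    rw [h]; exact hb1
  · exact ⟨rfl, by omega, by push_cast; omega⟩

lemma hstrip_unique {P S S' : Set Pixel} (h : IsHStrip P S) (h' : IsHStrip P S')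
    {p : Pixel} (hp : p ∈ S) (hp' : p ∈ S') : S = S' := by
  obtain ⟨x, y, ℓ, rfl, hsub, hl, hr⟩ := h
  obtain ⟨x', y', ℓ', rfl, hsub', hl', hr'⟩ := h'
  obtain ⟨hy, hx1, hx2⟩ := hp
  obtain ⟨hy', hx1', hx2'⟩ := hp'
  have hyy : y' = y := by rw [← hy, ← hy']
  subst hyy
  have hxx : x = x' := by
    by_contra hne
    rcases lt_or_gt_of_ne hne with hlt | hlt
    · exact hl' (hsub ⟨rfl, by omega, by omega⟩)
    · exact hl (hsub' ⟨rfl, by omega, by omega⟩)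
  have hee : x + (ℓ : ℤ) = x' + (ℓ' : ℤ) := by
    by_contra hne
    rcases lt_or_gt_of_ne hne with hlt | hlt
    · exact hr (hsub' ⟨rfl, by omega, by omega⟩)
    · exact hr' (hsub ⟨rfl, by omega, by omega⟩)
  ext q
  simp only [Set.mem_setOf_eq]
  constructor <;> rintro ⟨h1, h2, h3⟩ <;> exact ⟨h1, by omega, by omega⟩

lemma vstrip_unique {P S S' : Set Pixel} (h : IsVStrip P S) (h' : IsVStrip P S')
    {p : Pixel} (hp : p ∈ S) (hp' : p ∈ S') : S = S' := by
  obtain ⟨x, y, ℓ, rfl, hsub, hl, hr⟩ := h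
  obtain ⟨x', y', ℓ', rfl, hsub', hl', hr'⟩ := h'
  obtain ⟨hy, hx1, hx2⟩ := hp
  obtain ⟨hy', hx1', hx2'⟩ := hp'
  have hyy : x' = x := by rw [← hy, ← hy']
  subst hyy
  have hxx : y = y' := by
    by_contra hne
    rcases lt_or_gt_of_ne hne with hlt | hlt
    · exact hl' (hsub ⟨rfl, by omega, by omega⟩)
    · exact hl (hsub' ⟨rfl, by omega, by omega⟩)
  have hee : y + (ℓ : ℤ) = y' + (ℓ' : ℤ) := by
    by_contra hne
    rcases lt_or_gt_of_ne hne with hlt | hlt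
    · exact hr (hsub' ⟨rfl, by omega, by omega⟩)
    · exact hr' (hsub ⟨rfl, by omega, by omega⟩)
  ext q
  simp only [Set.mem_setOf_eq]
  constructor <;> rintro ⟨h1, h2, h3⟩ <;> exact ⟨h1, by omega, by omega⟩

/-- Strip cover / rook placement duality: for every region `P`, the minimum
size of a strip cover of `P` equals the maximum size of a rook placement
in `P`. -/
theorem minStripCover_eq_maxRookPlacement (P : Set Pixel) (hP : IsRegion P) :
    minStripCover P = sSup {m | ∃ R : Set Pixel, IsRookPlacement P R ∧ R.ncard = m} := by
  classical
  obtain ⟨hfin, hne, hconn⟩ := hP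
  have hHex : ∀ p : Pixel, ∃ S : Set Pixel, p ∈ P → (IsHStrip P S ∧ p ∈ S) := by
    intro p
    by_cases h : p ∈ P
    · obtain ⟨S, hS⟩ := exists_hstrip hfin h
      exact ⟨S, fun _ => hS⟩
    · exact ⟨∅, fun hc => absurd hc h⟩
  have hVex : ∀ p : Pixel, ∃ S : Set Pixel, p ∈ P → (IsVStrip P S ∧ p ∈ S) := by
    intro p
    by_cases h : p ∈ P
    · obtain ⟨S, hS⟩ := exists_vstrip hfin h
      exact ⟨S, fun _ => hS⟩
    · exact ⟨∅, fun hc => absurd hc h⟩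
  choose Hf hHf using hHex
  choose Vf hVf using hVex
  have hHuniq : ∀ p (h : p ∈ P), ∀ S, IsHStrip P S → p ∈ S → S = Hf p :=
    fun p h S hS hpS => hstrip_unique hS (hHf p h).1 hpS (hHf p h).2
  have hVuniq : ∀ p (h : p ∈ P), ∀ S, IsVStrip P S → p ∈ S → S = Vf p :=
    fun p h S hS hpS => vstrip_unique hS (hVf p h).1 hpS (hVf p h).2
  have hstripsub : ∀ S, IsStrip P S → S ⊆ P := by
    rintro S (⟨x, y, ℓ, rfl, hsub, -, -⟩ | ⟨x, y, ℓ, rfl, hsub, -, -⟩) <;> exact hsub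
  have hstripne : ∀ S, IsStrip P S → S.Nonempty := by
    rintro S (⟨x, y, ℓ, rfl, -, -, -⟩ | ⟨x, y, ℓ, rfl, -, -, -⟩)
    · exact ⟨(x, y), ⟨rfl, le_refl x, by omega⟩⟩
    · exact ⟨(x, y), ⟨rfl, le_refl y, by omega⟩⟩
  have hclass : ∀ S, IsStrip P S → (∃ p ∈ P, S = Hf p) ∨ (∃ p ∈ P, S = Vf p) := by
    intro S hS
    obtain ⟨q, hq⟩ := hstripne S hS
    have hqP : q ∈ P := hstripsub S hS hq
    rcases hS with h | h
    · exact Or.inl ⟨q, hqP, hHuniq q hqP S h hq⟩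
    · exact Or.inr ⟨q, hqP, hVuniq q hqP S h hq⟩
  -- weak duality
  have hweak : ∀ F R, IsStripCover P F → IsRookPlacement P R → R.ncard ≤ F.ncard := by
    intro F R hF hR
    have hFsub : F ⊆ (Hf '' P) ∪ (Vf '' P) := by
      intro S hS
      rcases hclass S (hF.1 S hS) with ⟨p, hp, rfl⟩ | ⟨p, hp, rfl⟩
      · exact Or.inl ⟨p, hp, rfl⟩
      · exact Or.inr ⟨p, hp, rfl⟩
    have hFfin : F.Finite := ((hfin.image Hf).union (hfin.image Vf)).subset hFsub
    have hchoice : ∀ r : Pixel, ∃ S : Set Pixel, r ∈ R → (S ∈ F ∧ r ∈ S) := by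
      intro r
      by_cases hr : r ∈ R
      · have hrP : r ∈ P := hR.1 hr
        have hmem : r ∈ ⋃₀ F := by rw [hF.2]; exact hrP
        obtain ⟨S, hSF, hrS⟩ := hmem
        exact ⟨S, fun _ => ⟨hSF, hrS⟩⟩
      · exact ⟨∅, fun hc => absurd hc hr⟩
    choose σ hσ using hchoice
    apply Set.ncard_le_ncard_of_injOn σ (fun r hr => (hσ r hr).1) ?_ hFfin
    intro r hr r' hr' hrr
    by_contra hne
    refine hR.2 r hr r' hr' hne ⟨σ r, hF.1 _ (hσ r hr).1, (hσ r hr).2, ?_⟩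
    rw [hrr]
    exact (hσ r' hr').2
  -- König
  obtain ⟨M, CA, CB, hME, hMf, hMg, hCAim, hCBim, hcov, hcard⟩ := koenig hfin.toFinset Hf Vf
  have hMP : ∀ e ∈ M, e ∈ P := fun e he => hfin.mem_toFinset.mp (hME he)
  have hrook : IsRookPlacement P ↑M := by
    refine ⟨fun e he => hMP e (Finset.mem_coe.mp he), ?_⟩
    intro p hp q hq hpq hex
    obtain ⟨S, hS, hpS, hqS⟩ := hex
    have hpP : p ∈ P := hMP p (Finset.mem_coe.mp hp)
    have hqP : q ∈ P := hMP q (Finset.mem_coe.mp hq)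
    rcases hS with h | h
    · have h1 : Hf p = Hf q := by
        rw [← hHuniq p hpP S h hpS, ← hHuniq q hqP S h hqS]
      exact hpq (hMf hp hq h1)
    · have h1 : Vf p = Vf q := by
        rw [← hVuniq p hpP S h hpS, ← hVuniq q hqP S h hqS]
      exact hpq (hMg hp hq h1)
  have hRcard : (↑M : Set Pixel).ncard = M.card := Set.ncard_coe_finset M
  set F0 : Set (Set Pixel) := ↑(CA ∪ CB) with hF0
  have hF0cover : IsStripCover P F0 := by
    have hF0strips : ∀ S ∈ F0, IsStrip P S := by
      intro S hS
      rcases Finset.mem_union.mp (Finset.mem_coe.mp hS) with h | h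
      · obtain ⟨e, he, rfl⟩ := hCAim S h
        exact Or.inl (hHf e (hfin.mem_toFinset.mp he)).1
      · obtain ⟨e, he, rfl⟩ := hCBim S h
        exact Or.inr (hVf e (hfin.mem_toFinset.mp he)).1
    refine ⟨hF0strips, ?_⟩
    apply Set.Subset.antisymm
    · rintro x ⟨S, hSF, hxS⟩
      exact hstripsub S (hF0strips S hSF) hxS
    · intro p hp
      rcases hcov p (hfin.mem_toFinset.mpr hp) with h | h
      · exact ⟨Hf p, Finset.mem_coe.mpr (Finset.mem_union_left _ h), (hHf p hp).2⟩
      · exact ⟨Vf p, Finset.mem_coe.mpr (Finset.mem_union_right _ h), (hVf p hp).2⟩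
  have hF0le : F0.ncard ≤ M.card := by
    rw [hF0, Set.ncard_coe_finset]
    exact le_trans (Finset.card_union_le _ _) hcard
  have hF0ge : M.card ≤ F0.ncard := by
    have := hweak F0 ↑M hF0cover hrook
    rwa [hRcard] at this
  have hF0eq : F0.ncard = M.card := le_antisymm hF0le hF0ge
  have h1 : minStripCover P = M.card := by
    unfold minStripCover
    apply le_antisymm
    · exact Nat.sInf_le ⟨F0, hF0cover, hF0eq⟩
    · refine le_csInf ⟨F0.ncard, F0, hF0cover, rfl⟩ ?_
      rintro m ⟨F, hF, rfl⟩
      calc M.card = (↑M : Set Pixel).ncard := hRcard.symm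
        _ ≤ F.ncard := hweak F ↑M hF hrook
  have h2 : sSup {m | ∃ R : Set Pixel, IsRookPlacement P R ∧ R.ncard = m} = M.card := by
    apply le_antisymm
    · refine csSup_le ⟨M.card, ⟨↑M, hrook, hRcard⟩⟩ ?_
      rintro m ⟨R, hR, rfl⟩
      calc R.ncard ≤ F0.ncard := hweak F0 R hF0cover hR
        _ = M.card := hF0eq
    · refine le_csSup ⟨M.card, ?_⟩ ⟨↑M, hrook, hRcard⟩
      rintro m ⟨R, hR, rfl⟩
      exact le_trans (hweak F0 R hF0cover hR) hF0le
  rw [h1, h2]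
end

section
/- Let V be a finite set of even cardinality at least 2, and let w : V × V → ℝ≥0 be a symmetric weight function. Suppose a, b ∈ V are distinct, w(a, b) = 0, and for all x, y ∈ V one has w(x, y) ≤ w(x, a) + w(b, y) and w(x, y) ≤ w(x, b) + w(a, y). Then among the perfect matchings of V of minimum total weight there is one containing the pair {a, b}. -/
/-- Any finset of even cardinality admits a pairing (an involution without
fixed points on the set, identity outside). -/
lemma pairing_exists {α : Type} [DecidableEq α] (s : Finset α) (h : Even s.card) :
    ∃ f : α → α, (∀ x ∈ s, f x ∈ s ∧ f (f x) = x ∧ f x ≠ x) ∧ ∀ x, x ∉ s → f x = x := by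
  induction s using Finset.strongInduction with
  | _ s ih =>
    rcases s.eq_empty_or_nonempty with rfl | ⟨x, hx⟩
    · exact ⟨id, by simp, by simp⟩
    · have h2 : 2 ≤ s.card := by
        rcases h with ⟨k, hk⟩
        have : 0 < s.card := Finset.card_pos.mpr ⟨x, hx⟩
        omega
      obtain ⟨y, hy⟩ : (s.erase x).Nonempty := by
        rw [← Finset.card_pos, Finset.card_erase_of_mem hx]; omega
      have hyx : y ≠ x := Finset.ne_of_mem_erase hy
      have hys : y ∈ s := Finset.mem_of_mem_erase hy
      set t := (s.erase x).erase y with ht_def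
      have hts : t ⊂ s := by
        refine Finset.ssubset_iff_of_subset ?_ |>.mpr ⟨x, hx, ?_⟩
        · intro z hz
          exact Finset.mem_of_mem_erase (Finset.mem_of_mem_erase hz)
        · simp [ht_def]
      have htc : t.card = s.card - 2 := by
        rw [ht_def, Finset.card_erase_of_mem hy, Finset.card_erase_of_mem hx]
        omega
      have hte : Even t.card := by
        rcases h with ⟨k, hk⟩
        exact ⟨k - 1, by omega⟩
      obtain ⟨f, hf, hf'⟩ := ih t hts hte
      have hmem_t : ∀ z, z ∈ t ↔ z ∈ s ∧ z ≠ x ∧ z ≠ y := by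
        intro z; simp [ht_def, and_comm]; tauto
      set F : α → α := fun z => if z = x then y else if z = y then x else f z with hF
      have Fx : F x = y := by simp [hF]
      have Fy : F y = x := by simp [hF, hyx]
      have Ft : ∀ z, z ≠ x → z ≠ y → F z = f z := by
        intro z h1 h2; simp [hF, h1, h2]
      refine ⟨F, ?_, ?_⟩
      · intro z hz
        by_cases hzx : z = x
        · rw [hzx, Fx, Fy]; exact ⟨hys, rfl, hyx⟩
        by_cases hzy : z = y
        · rw [hzy, Fy, Fx]; exact ⟨hx, rfl, fun h => hyx h.symm⟩
        have hzt : z ∈ t := (hmem_t z).mpr ⟨hz, hzx, hzy⟩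
        obtain ⟨hfz, hff, hne⟩ := hf z hzt
        have hfzx : f z ≠ x := ((hmem_t (f z)).mp hfz).2.1
        have hfzy : f z ≠ y := ((hmem_t (f z)).mp hfz).2.2
        rw [Ft z hzx hzy, Ft (f z) hfzx hfzy]
        exact ⟨((hmem_t (f z)).mp hfz).1, hff, hne⟩
      · intro z hz
        have hzx : z ≠ x := fun h => hz (h ▸ hx)
        have hzy : z ≠ y := fun h => hz (h ▸ hys)
        have hzt : z ∉ t := fun h => hz ((hmem_t z).mp h).1
        rw [Ft z hzx hzy, hf' z hzt]

/-- Exchange lemma for minimum-weight perfect matchings: let `V` be a finite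
set of even cardinality at least 2 (here, a finite type `α`), and let `w` be a
symmetric nonnegative weight function. If `a ≠ b`, `w a b = 0`, and
`w x y ≤ w x a + w b y` and `w x y ≤ w x b + w a y` for all `x, y`, then among
the perfect matchings of minimum total weight (perfect matchings encoded as
fixed-point-free involutions) there is one containing the pair `{a, b}`. -/
theorem exists_min_matching_containing_zero_pair
    (α : Type) [Fintype α] [DecidableEq α]
    (hcard : 2 ≤ Fintype.card α) (heven : Even (Fintype.card α))
    (w : α → α → ℝ) (hw0 : ∀ x y, 0 ≤ w x y) (hsymm : ∀ x y, w x y = w y x)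
    (a b : α) (hab : a ≠ b) (hwab : w a b = 0)
    (htri1 : ∀ x y, w x y ≤ w x a + w b y)
    (htri2 : ∀ x y, w x y ≤ w x b + w a y) :
    ∃ f : α → α, (∀ x, f (f x) = x) ∧ (∀ x, f x ≠ x) ∧ f a = b ∧
      ∀ g : α → α, (∀ x, g (g x) = x) → (∀ x, g x ≠ x) →
        ∑ x, w x (f x) ≤ ∑ x, w x (g x) := by
  classical
  -- step 1: there is at least one fpf involution with f a = b
  have hex : ∃ f : α → α, (∀ x, f (f x) = x) ∧ (∀ x, f x ≠ x) ∧ f a = b := by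
    set s : Finset α := Finset.univ \ {a, b} with hs
    have hscard : s.card = Fintype.card α - 2 := by
      rw [hs, Finset.card_sdiff_of_subset (Finset.subset_univ _), Finset.card_univ]
      simp [Finset.card_insert_of_notMem, hab]
    have hse : Even s.card := by
      rcases heven with ⟨k, hk⟩
      exact ⟨k - 1, by omega⟩
    obtain ⟨f, hf, hf'⟩ := pairing_exists s hse
    have hmem : ∀ z, z ∈ s ↔ z ≠ a ∧ z ≠ b := by intro z; simp [hs]
    set F : α → α := fun z => if z = a then b else if z = b then a else f z with hF
    have Fa : F a = b := by simp [hF]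
    have Fb : F b = a := by simp [hF, hab]
    have Fo : ∀ z, z ≠ a → z ≠ b → F z = f z := by
      intro z h1 h2; simp [hF, h1, h2]
    refine ⟨F, ?_, ?_, Fa⟩
    · intro z
      by_cases hza : z = a
      · rw [hza, Fa, Fb]
      by_cases hzb : z = b
      · rw [hzb, Fb, Fa]
      have hzs : z ∈ s := (hmem z).mpr ⟨hza, hzb⟩
      obtain ⟨hfz, hff, hne⟩ := hf z hzs
      have h1 : f z ≠ a := ((hmem (f z)).mp hfz).1
      have h2 : f z ≠ b := ((hmem (f z)).mp hfz).2
      rw [Fo z hza hzb, Fo (f z) h1 h2, hff]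
    · intro z
      by_cases hza : z = a
      · rw [hza, Fa]; exact hab.symm
      by_cases hzb : z = b
      · rw [hzb, Fb]; exact hab
      have hzs : z ∈ s := (hmem z).mpr ⟨hza, hzb⟩
      rw [Fo z hza hzb]; exact (hf z hzs).2.2
  -- step 2: minimize over the finite set of fpf involutions with f a = b
  obtain ⟨f₀, hf₀⟩ := hex
  set S : Finset (α → α) :=
    Finset.univ.filter (fun f => (∀ x, f (f x) = x) ∧ (∀ x, f x ≠ x) ∧ f a = b) with hS
  have hf₀S : f₀ ∈ S := by simp [hS, hf₀.1, hf₀.2.1, hf₀.2.2]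
  obtain ⟨f, hfS, hfmin⟩ := S.exists_min_image (fun f => ∑ x, w x (f x)) ⟨f₀, hf₀S⟩
  rw [hS, Finset.mem_filter] at hfS
  obtain ⟨-, hfinv, hffpf, hfab⟩ := hfS
  refine ⟨f, hfinv, hffpf, hfab, ?_⟩
  intro g hginv hgfpf
  -- step 3: exchange argument
  by_cases hgab : g a = b
  · exact hfmin g (by simp [hS, hginv, hgfpf, hgab])
  · obtain ⟨a', ha'⟩ : ∃ a', g a = a' := ⟨_, rfl⟩
    obtain ⟨b', hb'⟩ : ∃ b', g b = b' := ⟨_, rfl⟩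
    have hga' : g a' = a := by rw [← ha', hginv]
    have hgb' : g b' = b := by rw [← hb', hginv]
    have haa' : a' ≠ a := fun h => hgfpf a (ha' ▸ h)
    have hbb' : b' ≠ b := fun h => hgfpf b (hb' ▸ h)
    have ha'b : a' ≠ b := fun h => hgab (ha' ▸ h)
    have hb'a : b' ≠ a := by
      intro h
      apply hgab
      have hh : g b' = g a := by rw [h]
      rw [hgb'] at hh
      exact hh.symm
    have ha'b' : a' ≠ b' := by
      intro h
      apply hab
      have : g a' = g b' := by rw [h]
      rw [hga', hgb'] at this
      exact this
    set g' : α → α := fun z =>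
      if z = a then b else if z = b then a
      else if z = a' then b' else if z = b' then a' else g z with hg'
    have hg'a : g' a = b := by simp [hg']
    have hg'b : g' b = a := by simp [hg', hab]
    have hg'a' : g' a' = b' := by simp [hg', ha'b, haa']
    have hg'b' : g' b' = a' := by simp [hg', hb'a, hbb', ha'b'.symm]
    have hg'other : ∀ z, z ≠ a → z ≠ b → z ≠ a' → z ≠ b' → g' z = g z := by
      intro z h1 h2 h3 h4; simp [hg', h1, h2, h3, h4]
    have hg'inv : ∀ x, g' (g' x) = x := by
      intro x
      by_cases h1 : x = a; · rw [h1, hg'a, hg'b]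
      by_cases h2 : x = b; · rw [h2, hg'b, hg'a]
      by_cases h3 : x = a'; · rw [h3, hg'a', hg'b']
      by_cases h4 : x = b'; · rw [h4, hg'b', hg'a']
      rw [hg'other x h1 h2 h3 h4]
      have k1 : g x ≠ a := fun h => h3 (by rw [← hginv x, h, ha'])
      have k2 : g x ≠ b := fun h => h4 (by rw [← hginv x, h, hb'])
      have k3 : g x ≠ a' := fun h => h1 (by rw [← hginv x, h, hga'])
      have k4 : g x ≠ b' := fun h => h2 (by rw [← hginv x, h, hgb'])
      rw [hg'other _ k1 k2 k3 k4, hginv]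
    have hg'fpf : ∀ x, g' x ≠ x := by
      intro x
      by_cases h1 : x = a; · rw [h1, hg'a]; exact hab.symm
      by_cases h2 : x = b; · rw [h2, hg'b]; exact hab
      by_cases h3 : x = a'; · rw [h3, hg'a']; exact ha'b'.symm
      by_cases h4 : x = b'; · rw [h4, hg'b']; exact ha'b'
      rw [hg'other x h1 h2 h3 h4]; exact hgfpf x
    have hstep : ∑ x, w x (g' x) ≤ ∑ x, w x (g x) := by
      have split : ∀ h : α → α,
          ∑ x, w x (h x) = ∑ x ∈ ({a, b, a', b'} : Finset α), w x (h x)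
            + ∑ x ∈ ({a, b, a', b'} : Finset α)ᶜ, w x (h x) := by
        intro h; rw [Finset.sum_add_sum_compl]
      rw [split g', split g]
      have hcompl : ∑ x ∈ ({a, b, a', b'} : Finset α)ᶜ, w x (g' x)
          = ∑ x ∈ ({a, b, a', b'} : Finset α)ᶜ, w x (g x) := by
        apply Finset.sum_congr rfl
        intro x hx
        simp only [Finset.mem_compl, Finset.mem_insert, Finset.mem_singleton, not_or] at hx
        rw [hg'other x hx.1 hx.2.1 hx.2.2.1 hx.2.2.2]
      rw [hcompl]
      apply add_le_add_left
      have e1 : ∑ x ∈ ({a, b, a', b'} : Finset α), w x (g' x)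
          = w a b + w b a + w a' b' + w b' a' := by
        rw [Finset.sum_insert (by simp [hab, haa'.symm, hb'a.symm]),
            Finset.sum_insert (by simp [ha'b.symm, hbb'.symm]),
            Finset.sum_insert (by simp [ha'b']),
            Finset.sum_singleton, hg'a, hg'b, hg'a', hg'b']
        ring
      have e2 : ∑ x ∈ ({a, b, a', b'} : Finset α), w x (g x)
          = w a a' + w b b' + w a' a + w b' b := by
        rw [Finset.sum_insert (by simp [hab, haa'.symm, hb'a.symm]),
            Finset.sum_insert (by simp [ha'b.symm, hbb'.symm]),
            Finset.sum_insert (by simp [ha'b']),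
            Finset.sum_singleton, ha', hb', hga', hgb']
        ring
      rw [e1, e2, hwab, hsymm b a, hwab]
      have t1 : w a' b' ≤ w a' a + w b b' := htri1 a' b'
      have t2 : w b' a' ≤ w b' b + w a a' := htri2 b' a'
      nlinarith [hsymm a a', hsymm b b']
    calc ∑ x, w x (f x) ≤ ∑ x, w x (g' x) :=
          hfmin g' (by simp [hS, hg'inv, hg'fpf, hg'a])
      _ ≤ ∑ x, w x (g x) := hstep
end

section
/- For every finite set V ⊆ ℤ × ℤ there exists a family (s_v)_{v ∈ V} of closed axis-parallel line segments of length 1 in ℝ² such that for all distinct u, v ∈ V, the segments s_u and s_v intersect if and only if u and v are at ℓ¹-distance 1. In other words, every grid graph is the intersection graph of a set of axis-parallel unit segments. -/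
open Set

lemma mem_hseg {a p : ℝ × ℝ} :
    p ∈ segment ℝ a (a + ((1:ℝ), (0:ℝ))) ↔ p.2 = a.2 ∧ a.1 ≤ p.1 ∧ p.1 ≤ a.1 + 1 := by
  rw [segment_eq_image']
  constructor
  · rintro ⟨t, ⟨ht0, ht1⟩, rfl⟩
    refine ⟨by simp, by simp; linarith, by simp; linarith⟩
  · rintro ⟨h2, h0, h1⟩
    refine ⟨p.1 - a.1, ⟨by linarith, by linarith⟩, ?_⟩
    have : p = (p.1, p.2) := rfl
    rw [this, h2]
    simp [Prod.ext_iff]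

lemma mem_vseg {a p : ℝ × ℝ} :
    p ∈ segment ℝ a (a + ((0:ℝ), (1:ℝ))) ↔ p.1 = a.1 ∧ a.2 ≤ p.2 ∧ p.2 ≤ a.2 + 1 := by
  rw [segment_eq_image']
  constructor
  · rintro ⟨t, ⟨ht0, ht1⟩, rfl⟩
    refine ⟨by simp, by simp; linarith, by simp; linarith⟩
  · rintro ⟨h2, h0, h1⟩
    refine ⟨p.2 - a.2, ⟨by linarith, by linarith⟩, ?_⟩
    have : p = (p.1, p.2) := rfl
    rw [this, h2]
    simp [Prod.ext_iff]

lemma hh_inter {a b : ℝ × ℝ} :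
    (segment ℝ a (a + ((1:ℝ),(0:ℝ))) ∩ segment ℝ b (b + ((1:ℝ),(0:ℝ)))).Nonempty ↔
      a.2 = b.2 ∧ |a.1 - b.1| ≤ 1 := by
  constructor
  · rintro ⟨p, hp, hq⟩
    rw [mem_hseg] at hp hq
    obtain ⟨hp2, hp0, hp1⟩ := hp
    obtain ⟨hq2, hq0, hq1⟩ := hq
    exact ⟨hp2 ▸ hq2 ▸ rfl, abs_le.mpr ⟨by linarith, by linarith⟩⟩
  · rintro ⟨h2, h1⟩
    rw [abs_le] at h1
    refine ⟨(max a.1 b.1, a.2), mem_hseg.mpr ⟨rfl, le_max_left _ _, ?_⟩,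
      mem_hseg.mpr ⟨h2, le_max_right _ _, ?_⟩⟩ <;>
    · rcases max_cases a.1 b.1 with ⟨h, _⟩ | ⟨h, _⟩ <;> rw [h] <;> linarith [h1.1, h1.2]

lemma vv_inter {a b : ℝ × ℝ} :
    (segment ℝ a (a + ((0:ℝ),(1:ℝ))) ∩ segment ℝ b (b + ((0:ℝ),(1:ℝ)))).Nonempty ↔
      a.1 = b.1 ∧ |a.2 - b.2| ≤ 1 := by
  constructor
  · rintro ⟨p, hp, hq⟩
    rw [mem_vseg] at hp hq
    obtain ⟨hp2, hp0, hp1⟩ := hp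
    obtain ⟨hq2, hq0, hq1⟩ := hq
    exact ⟨hp2 ▸ hq2 ▸ rfl, abs_le.mpr ⟨by linarith, by linarith⟩⟩
  · rintro ⟨h2, h1⟩
    rw [abs_le] at h1
    refine ⟨(a.1, max a.2 b.2), mem_vseg.mpr ⟨rfl, le_max_left _ _, ?_⟩,
      mem_vseg.mpr ⟨h2, le_max_right _ _, ?_⟩⟩ <;>
    · rcases max_cases a.2 b.2 with ⟨h, _⟩ | ⟨h, _⟩ <;> rw [h] <;> linarith [h1.1, h1.2]

lemma hv_inter {a b : ℝ × ℝ} :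
    (segment ℝ a (a + ((1:ℝ),(0:ℝ))) ∩ segment ℝ b (b + ((0:ℝ),(1:ℝ)))).Nonempty ↔
      (a.1 ≤ b.1 ∧ b.1 ≤ a.1 + 1 ∧ b.2 ≤ a.2 ∧ a.2 ≤ b.2 + 1) := by
  constructor
  · rintro ⟨p, hp, hq⟩
    rw [mem_hseg] at hp
    rw [mem_vseg] at hq
    obtain ⟨hp2, hp0, hp1⟩ := hp
    obtain ⟨hq2, hq0, hq1⟩ := hq
    exact ⟨by linarith [hq2 ▸ hp0], by linarith [hq2 ▸ hp1], by linarith [hp2 ▸ hq0],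
      by linarith [hp2 ▸ hq1]⟩
  · rintro ⟨h1, h2, h3, h4⟩
    exact ⟨(b.1, a.2), mem_hseg.mpr ⟨rfl, h1, h2⟩, mem_vseg.mpr ⟨rfl, h3, h4⟩⟩

set_option maxHeartbeats 1000000 in
/-- Every grid graph is the intersection graph of a set of axis-parallel unit
segments: for every finite `V ⊆ ℤ × ℤ` there is a family of closed
axis-parallel unit segments in `ℝ²`, one per point of `V`, such that two
segments of distinct points intersect iff the points are at ℓ¹-distance 1. -/
theorem gridGraph_is_unit_segment_intersection_graph (V : Finset (ℤ × ℤ)) :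
    ∃ s : ℤ × ℤ → Set (ℝ × ℝ),
      (∀ v ∈ V, ∃ a : ℝ × ℝ,
        s v = segment ℝ a (a + ((1 : ℝ), (0 : ℝ))) ∨
        s v = segment ℝ a (a + ((0 : ℝ), (1 : ℝ)))) ∧
      ∀ u ∈ V, ∀ v ∈ V, u ≠ v →
        ((s u ∩ s v).Nonempty ↔ |u.1 - v.1| + |u.2 - v.2| = 1) := by
  classical
  set N : ℕ := V.sup (fun p => p.1.natAbs + p.2.natAbs) with hNdef
  set ε : ℝ := 1 / (100 * ((N : ℝ) + 1)) with hεdef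
  have hεpos : 0 < ε := by rw [hεdef]; positivity
  have hεz : ∀ z : ℝ, |z| ≤ (N : ℝ) → |ε * z| ≤ 1/100 := by
    intro z hz
    rw [abs_mul, abs_of_pos hεpos, hεdef]
    rw [div_mul_eq_mul_div, one_mul, div_le_div_iff₀ (by positivity) (by norm_num)]
    have h0 : (0:ℝ) ≤ |z| := abs_nonneg z
    nlinarith
  have hsmall : ∀ v ∈ V, |(v.1 : ℝ) + (v.2 : ℝ)| ≤ (N : ℝ) ∧ |(v.1 : ℝ) - (v.2 : ℝ)| ≤ (N : ℝ) := by
    intro v hv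
    have h := Finset.le_sup (f := fun p : ℤ × ℤ => p.1.natAbs + p.2.natAbs) hv
    have h1 : |(v.1 : ℝ)| + |(v.2 : ℝ)| ≤ (N : ℝ) := by
      have h2 : ((v.1.natAbs + v.2.natAbs : ℕ) : ℝ) ≤ (N : ℝ) := by exact_mod_cast h
      rw [Nat.cast_add, Nat.cast_natAbs, Nat.cast_natAbs] at h2
      push_cast at h2
      exact h2
    exact ⟨le_trans (abs_add_le _ _) h1, le_trans (abs_sub _ _) h1⟩
  clear_value N
  set A : ℤ × ℤ → ℝ × ℝ := fun p =>
    (((p.1 : ℝ) + (p.2 : ℝ))/4 - 1/2, ((p.1 : ℝ) - (p.2 : ℝ))/4 + ε * ((p.1 : ℝ) + (p.2 : ℝ)))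
    with hA
  set B : ℤ × ℤ → ℝ × ℝ := fun p =>
    (((p.1 : ℝ) + (p.2 : ℝ))/4 + ε * ((p.1 : ℝ) - (p.2 : ℝ)), ((p.1 : ℝ) - (p.2 : ℝ))/4 - 1/2)
    with hB
  refine ⟨fun p => if Even (p.1 + p.2) then segment ℝ (A p) (A p + ((1:ℝ),(0:ℝ)))
      else segment ℝ (B p) (B p + ((0:ℝ),(1:ℝ))), ?_, ?_⟩
  · intro v hv
    by_cases h : Even (v.1 + v.2)
    · exact ⟨A v, Or.inl (by dsimp only; rw [if_pos h])⟩
    · exact ⟨B v, Or.inr (by dsimp only; rw [if_neg h])⟩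
  · intro u hu v hv huv
    obtain ⟨hu1, hu2⟩ := hsmall u hu
    obtain ⟨hv1, hv2⟩ := hsmall v hv
    have eu1 := hεz _ hu1
    have eu2 := hεz _ hu2
    have ev1 := hεz _ hv1
    have ev2 := hεz _ hv2
    rw [abs_le] at eu1 eu2 ev1 ev2
    by_cases pu : Even (u.1 + u.2) <;> by_cases pv : Even (v.1 + v.2)
    · -- both even: both horizontal, never intersect, distance even
      dsimp only
      rw [if_pos pu, if_pos pv, hh_inter]
      apply iff_of_false
      · rintro ⟨h2, -⟩
        simp only [hA] at h2
        by_cases hbd : u.1 - u.2 = v.1 - v.2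
        · have hac : u.1 + u.2 ≠ v.1 + v.2 := by
            intro h
            exact huv (Prod.ext (by omega) (by omega))
          have hbd' : (u.1 : ℝ) - (u.2 : ℝ) = (v.1 : ℝ) - (v.2 : ℝ) := by exact_mod_cast hbd
          rw [hbd'] at h2
          have : (u.1 : ℝ) + (u.2 : ℝ) = (v.1 : ℝ) + (v.2 : ℝ) :=
            mul_left_cancel₀ (ne_of_gt hεpos) (by linarith)
          exact hac (by exact_mod_cast this)
        · obtain ⟨k, hk⟩ := pu
          obtain ⟨l, hl⟩ := pv
          have hz : (2:ℤ) ≤ |(u.1 - u.2) - (v.1 - v.2)| := by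
            rw [Int.abs_eq_natAbs]; omega
          have hr : (2:ℝ) ≤ |((u.1:ℝ) - (u.2:ℝ)) - ((v.1:ℝ) - (v.2:ℝ))| := by
            exact_mod_cast hz
          rcases le_abs.mp hr with he | he <;> linarith
      · intro h
        obtain ⟨k, hk⟩ := pu
        obtain ⟨l, hl⟩ := pv
        simp only [Int.abs_eq_natAbs] at h
        omega
    · -- u even, v odd : horizontal vs vertical
      dsimp only
      rw [if_pos pu, if_neg pv, hv_inter]
      simp only [hA, hB]
      rw [Int.not_even_iff] at pv
      obtain ⟨k, hk⟩ := pu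
      constructor
      · rintro ⟨g1, g2, g3, g4⟩
        by_contra hne
        simp only [Int.abs_eq_natAbs] at hne
        have h3 : 3 ≤ |(u.1 + u.2) - (v.1 + v.2)| ∨ 3 ≤ |(u.1 - u.2) - (v.1 - v.2)| := by
          simp only [Int.abs_eq_natAbs]
          omega
        rcases h3 with h | h
        · have hr : (3:ℝ) ≤ |((u.1:ℝ) + (u.2:ℝ)) - ((v.1:ℝ) + (v.2:ℝ))| := by exact_mod_cast h
          rcases le_abs.mp hr with he | he <;> linarith
        · have hr : (3:ℝ) ≤ |((u.1:ℝ) - (u.2:ℝ)) - ((v.1:ℝ) - (v.2:ℝ))| := by exact_mod_cast h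
          rcases le_abs.mp hr with he | he <;> linarith
      · intro h
        have h3 : |(u.1 + u.2) - (v.1 + v.2)| = 1 ∧ |(u.1 - u.2) - (v.1 - v.2)| = 1 := by
          simp only [Int.abs_eq_natAbs] at h ⊢
          omega
        have hr1 : |((u.1:ℝ) + (u.2:ℝ)) - ((v.1:ℝ) + (v.2:ℝ))| = 1 := by exact_mod_cast h3.1
        have hr2 : |((u.1:ℝ) - (u.2:ℝ)) - ((v.1:ℝ) - (v.2:ℝ))| = 1 := by exact_mod_cast h3.2
        obtain ⟨b1, b2⟩ := abs_le.mp (le_of_eq hr1)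
        obtain ⟨b3, b4⟩ := abs_le.mp (le_of_eq hr2)
        exact ⟨by linarith, by linarith, by linarith, by linarith⟩
    · -- u odd, v even : vertical vs horizontal
      dsimp only
      rw [if_neg pu, if_pos pv, Set.inter_comm, hv_inter]
      simp only [hA, hB]
      rw [Int.not_even_iff] at pu
      obtain ⟨k, hk⟩ := pv
      constructor
      · rintro ⟨g1, g2, g3, g4⟩
        by_contra hne
        simp only [Int.abs_eq_natAbs] at hne
        have h3 : 3 ≤ |(u.1 + u.2) - (v.1 + v.2)| ∨ 3 ≤ |(u.1 - u.2) - (v.1 - v.2)| := by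
          simp only [Int.abs_eq_natAbs]
          omega
        rcases h3 with h | h
        · have hr : (3:ℝ) ≤ |((u.1:ℝ) + (u.2:ℝ)) - ((v.1:ℝ) + (v.2:ℝ))| := by exact_mod_cast h
          rcases le_abs.mp hr with he | he <;> linarith
        · have hr : (3:ℝ) ≤ |((u.1:ℝ) - (u.2:ℝ)) - ((v.1:ℝ) - (v.2:ℝ))| := by exact_mod_cast h
          rcases le_abs.mp hr with he | he <;> linarith
      · intro h
        have h3 : |(u.1 + u.2) - (v.1 + v.2)| = 1 ∧ |(u.1 - u.2) - (v.1 - v.2)| = 1 := by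
          simp only [Int.abs_eq_natAbs] at h ⊢
          omega
        have hr1 : |((u.1:ℝ) + (u.2:ℝ)) - ((v.1:ℝ) + (v.2:ℝ))| = 1 := by exact_mod_cast h3.1
        have hr2 : |((u.1:ℝ) - (u.2:ℝ)) - ((v.1:ℝ) - (v.2:ℝ))| = 1 := by exact_mod_cast h3.2
        obtain ⟨b1, b2⟩ := abs_le.mp (le_of_eq hr1)
        obtain ⟨b3, b4⟩ := abs_le.mp (le_of_eq hr2)
        exact ⟨by linarith, by linarith, by linarith, by linarith⟩
    · -- both odd: both vertical
      dsimp only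
      rw [if_neg pu, if_neg pv, vv_inter]
      apply iff_of_false
      · rintro ⟨h2, -⟩
        simp only [hB] at h2
        by_cases hbd : u.1 + u.2 = v.1 + v.2
        · have hac : u.1 - u.2 ≠ v.1 - v.2 := by
            intro h
            exact huv (Prod.ext (by omega) (by omega))
          have hbd' : (u.1 : ℝ) + (u.2 : ℝ) = (v.1 : ℝ) + (v.2 : ℝ) := by exact_mod_cast hbd
          rw [hbd'] at h2
          have : (u.1 : ℝ) - (u.2 : ℝ) = (v.1 : ℝ) - (v.2 : ℝ) :=
            mul_left_cancel₀ (ne_of_gt hεpos) (by linarith)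
          exact hac (by exact_mod_cast this)
        · rw [Int.not_even_iff] at pu pv
          have hz : (2:ℤ) ≤ |(u.1 + u.2) - (v.1 + v.2)| := by
            rw [Int.abs_eq_natAbs]; omega
          have hr : (2:ℝ) ≤ |((u.1:ℝ) + (u.2:ℝ)) - ((v.1:ℝ) + (v.2:ℝ))| := by
            exact_mod_cast hz
          rcases le_abs.mp hr with he | he <;> linarith
      · intro h
        rw [Int.not_even_iff] at pu pv
        simp only [Int.abs_eq_natAbs] at h
        omega
end
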